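/- arXiv:1610.07302 — 4 statements merged into one kernel-verified Lean document; each statement's English description precedes it below -/
import Mathlib

section
/- Let a, b be positive real numbers and let f : ℝ → ℝ be defined by f(x) = (b·sinh(a·x))/(a·sinh(b·x)) for x ≠ 0 and f(0) = 1 (the continuous extension). Then the following are equivalent: (1) a ≤ b; (2) f is positive definite; (3) f is infinitely divisible. -/
open scoped ComplexOrder

/-- A function `φ : ℝ → ℂ` is positive definite if for every `n`, all real numbers
`x 1, …, x n` and complex numbers `c 1, …, c n`, the sum
`∑ i j, c i * conj (c j) * φ (x i - x j)` is a nonnegative real number. -/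
def IsPosDefFun (φ : ℝ → ℂ) : Prop :=
  ∀ (n : ℕ) (x : Fin n → ℝ) (c : Fin n → ℂ),
    0 ≤ ∑ i, ∑ j, c i * (starRingEnd ℂ) (c j) * φ (x i - x j)

/-- A real-valued function is infinitely divisible if every positive real power of it
is positive definite. -/
def IsInfDivFun (φ : ℝ → ℝ) : Prop :=
  ∀ r : ℝ, 0 < r → IsPosDefFun fun x => ((φ x ^ r : ℝ) : ℂ)

open MeasureTheory Filter Set

namespace SinhPD

lemma sq_sum (n : ℕ) (c : Fin n → ℂ) (g : Fin n → ℝ) :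
    ∑ i, ∑ j, c i * (starRingEnd ℂ) (c j) * ((g i : ℂ) * (g j : ℂ))
      = ((Complex.normSq (∑ i, c i * (g i : ℂ)) : ℝ) : ℂ) := by
  have h : ∀ i j : Fin n, c i * (starRingEnd ℂ) (c j) * ((g i : ℂ) * (g j : ℂ))
      = (c i * (g i : ℂ)) * (starRingEnd ℂ) (c j * (g j : ℂ)) := by
    intro i j
    rw [map_mul, Complex.conj_ofReal]
    ring
  simp_rw [h]
  rw [← Finset.sum_mul_sum]
  rw [← map_sum, Complex.mul_conj]

lemma cos_sum_eq (n : ℕ) (x : Fin n → ℝ) (c : Fin n → ℂ) (t : ℝ) :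
    ∑ i, ∑ j, c i * (starRingEnd ℂ) (c j) * ((Real.cos (t * (x i - x j)) : ℝ) : ℂ)
      = ((Complex.normSq (∑ i, c i * (Real.cos (t * x i) : ℂ))
          + Complex.normSq (∑ i, c i * (Real.sin (t * x i) : ℂ)) : ℝ) : ℂ) := by
  have h : ∀ i j : Fin n, c i * (starRingEnd ℂ) (c j) * ((Real.cos (t * (x i - x j)) : ℝ) : ℂ)
      = c i * (starRingEnd ℂ) (c j) * ((Real.cos (t * x i) : ℂ) * (Real.cos (t * x j) : ℂ))
        + c i * (starRingEnd ℂ) (c j) * ((Real.sin (t * x i) : ℂ) * (Real.sin (t * x j) : ℂ)) := by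
    intro i j
    rw [mul_sub, Real.cos_sub]
    push_cast
    ring
  simp_rw [h, Finset.sum_add_distrib]
  rw [sq_sum n c (fun i => Real.cos (t * x i)), sq_sum n c (fun i => Real.sin (t * x i))]
  push_cast
  ring

lemma posdef_cos (t : ℝ) : IsPosDefFun (fun x => ((Real.cos (t * x) : ℝ) : ℂ)) := by
  intro n x c
  rw [cos_sum_eq]
  rw [Complex.zero_le_real]
  exact add_nonneg (Complex.normSq_nonneg _) (Complex.normSq_nonneg _)

lemma posdef_const (r : ℝ) (hr : 0 ≤ r) : IsPosDefFun (fun _ => (r : ℂ)) := by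
  intro n x c
  have h : ∀ i j : Fin n, c i * (starRingEnd ℂ) (c j) * (r : ℂ)
      = (r : ℂ) * (c i * (starRingEnd ℂ) (c j) * (((1:ℝ) : ℂ) * ((1:ℝ) : ℂ))) := by
    intro i j; push_cast; ring
  simp_rw [h, ← Finset.mul_sum]
  rw [sq_sum n c (fun _ => 1)]
  exact mul_nonneg (Complex.zero_le_real.mpr hr) (Complex.zero_le_real.mpr (Complex.normSq_nonneg _))

lemma posdef_add {φ ψ : ℝ → ℂ} (hφ : IsPosDefFun φ) (hψ : IsPosDefFun ψ) :
    IsPosDefFun (fun x => φ x + ψ x) := by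
  intro n x c
  simp_rw [mul_add, Finset.sum_add_distrib]
  exact add_nonneg (hφ n x c) (hψ n x c)

lemma posdef_smul {φ : ℝ → ℂ} (hφ : IsPosDefFun φ) {r : ℝ} (hr : 0 ≤ r) :
    IsPosDefFun (fun x => (r : ℂ) * φ x) := by
  intro n x c
  have h : ∀ i j : Fin n, c i * (starRingEnd ℂ) (c j) * ((r : ℂ) * φ (x i - x j))
      = (r : ℂ) * (c i * (starRingEnd ℂ) (c j) * φ (x i - x j)) := fun i j => by ring
  simp_rw [h, ← Finset.mul_sum]
  have := hφ n x c
  exact mul_nonneg (Complex.zero_le_real.mpr hr) this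

lemma posdef_limit {φ : ℕ → ℝ → ℂ} {ψ : ℝ → ℂ} (hφ : ∀ N, IsPosDefFun (φ N))
    (hlim : ∀ x, Tendsto (fun N => φ N x) atTop (nhds (ψ x))) : IsPosDefFun ψ := by
  intro n x c
  have hT : Tendsto (fun N => ∑ i, ∑ j, c i * (starRingEnd ℂ) (c j) * φ N (x i - x j)) atTop
      (nhds (∑ i, ∑ j, c i * (starRingEnd ℂ) (c j) * ψ (x i - x j))) := by
    refine tendsto_finset_sum _ fun i _ => tendsto_finset_sum _ fun j _ => ?_
    exact (hlim (x i - x j)).const_mul _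
  have h1 : Tendsto (fun N => (∑ i, ∑ j, c i * (starRingEnd ℂ) (c j) * φ N (x i - x j)).re) atTop
      (nhds ((∑ i, ∑ j, c i * (starRingEnd ℂ) (c j) * ψ (x i - x j)).re)) :=
    (Complex.continuous_re.tendsto _).comp hT
  have h2 : Tendsto (fun N => (∑ i, ∑ j, c i * (starRingEnd ℂ) (c j) * φ N (x i - x j)).im) atTop
      (nhds ((∑ i, ∑ j, c i * (starRingEnd ℂ) (c j) * ψ (x i - x j)).im)) :=
    (Complex.continuous_im.tendsto _).comp hT
  rw [Complex.nonneg_iff]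
  constructor
  · exact le_of_tendsto_of_tendsto' tendsto_const_nhds h1
      (fun N => (Complex.nonneg_iff.mp (hφ N n x c)).1)
  · have h0 : (fun N => (∑ i, ∑ j, c i * (starRingEnd ℂ) (c j) * φ N (x i - x j)).im)
        = fun _ => (0 : ℝ) :=
      funext fun N => ((Complex.nonneg_iff.mp (hφ N n x c)).2).symm
    rw [h0] at h2
    exact tendsto_nhds_unique tendsto_const_nhds h2

lemma posdef_mul {φ χ : ℝ → ℂ} (hφ : IsPosDefFun φ) (hχ : IsPosDefFun χ)
    (hherm : ∀ x, χ (-x) = (starRingEnd ℂ) (χ x)) :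
    IsPosDefFun (fun x => φ x * χ x) := by
  intro n x c
  classical
  set N : Matrix (Fin n) (Fin n) ℂ := Matrix.of (fun i j => χ (x i - x j)) with hN
  have hPSD : N.PosSemidef := by
    refine Matrix.posSemidef_iff_dotProduct_mulVec.mpr ⟨?_, ?_⟩
    · ext i j
      simp only [Matrix.conjTranspose_apply, hN, Matrix.of_apply, RCLike.star_def]
      rw [← hherm, neg_sub]
    · intro v
      have h := hχ n x (fun i => (starRingEnd ℂ) (v i))
      have heq : dotProduct (star v) (N.mulVec v)
          = ∑ i, ∑ j, (starRingEnd ℂ) (v i) * (starRingEnd ℂ) ((starRingEnd ℂ) (v j)) *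
              χ (x i - x j) := by
        simp only [dotProduct, Matrix.mulVec, Pi.star_apply, hN, Matrix.of_apply,
          dotProduct, Finset.mul_sum, RingHomCompTriple.comp_apply, RingHom.id_apply]
        refine Finset.sum_congr rfl fun i _ => Finset.sum_congr rfl fun j _ => ?_
        simp only [RCLike.star_def, Complex.conj_conj]
        ring
      rw [heq]
      exact h
  obtain ⟨B, hB⟩ : ∃ B : Matrix (Fin n) (Fin n) ℂ, N = B.conjTranspose * B := by
    open scoped MatrixOrder Matrix.Norms.L2Operator in
    obtain ⟨B, hB⟩ := CStarAlgebra.nonneg_iff_eq_star_mul_self.mp hPSD.nonneg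
    exact ⟨B, hB⟩
  have hNij : ∀ i j, χ (x i - x j) = ∑ k, (starRingEnd ℂ) (B k i) * B k j := by
    intro i j
    have : N i j = (B.conjTranspose * B) i j := by rw [← hB]
    simpa [hN, Matrix.mul_apply, Matrix.conjTranspose_apply] using this
  show 0 ≤ ∑ i, ∑ j, c i * (starRingEnd ℂ) (c j) * (φ (x i - x j) * χ (x i - x j))
  calc (0:ℂ) ≤ ∑ k, ∑ i, ∑ j, (c i * (starRingEnd ℂ) (B k i)) *
        (starRingEnd ℂ) (c j * (starRingEnd ℂ) (B k j)) * φ (x i - x j) :=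
      Finset.sum_nonneg fun k _ => hφ n x (fun i => c i * (starRingEnd ℂ) (B k i))
    _ = ∑ i, ∑ j, c i * (starRingEnd ℂ) (c j) * (φ (x i - x j) * χ (x i - x j)) := by
      simp_rw [hNij, Finset.mul_sum]
      rw [Finset.sum_comm]
      refine Finset.sum_congr rfl fun i _ => ?_
      rw [Finset.sum_comm]
      refine Finset.sum_congr rfl fun j _ => Finset.sum_congr rfl fun k _ => ?_
      simp only [map_mul, Complex.conj_conj]
      ring

lemma integrableOn_cexp (c : ℂ) (hc : c.re < 0) :
    IntegrableOn (fun t : ℝ => Complex.exp (c * t)) (Ioi (0:ℝ)) := by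
  have h : IntegrableOn (fun t : ℝ => Real.exp ((-(-c.re)) * t)) (Ioi (0:ℝ)) :=
    exp_neg_integrableOn_Ioi 0 (by linarith)
  refine h.congr' ((Complex.continuous_exp.comp
      (continuous_const.mul Complex.continuous_ofReal)).aestronglyMeasurable) ?_
  refine Filter.Eventually.of_forall fun t => ?_
  rw [Complex.norm_exp, Real.norm_eq_abs, Real.abs_exp]
  simp [Complex.mul_re]

lemma integral_cexp_Ioi (c : ℂ) (hc : c.re < 0) :
    ∫ t in Ioi (0:ℝ), Complex.exp (c * t) = -1 / c := by
  have hc0 : c ≠ 0 := fun h => by simp [h] at hc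
  have hderiv : ∀ t ∈ Ici (0:ℝ), HasDerivAt (fun t : ℝ => Complex.exp (c * t) / c)
      (Complex.exp (c * t)) t := by
    intro t _
    have h1 : HasDerivAt (fun t : ℝ => (t : ℂ)) 1 t := Complex.ofRealCLM.hasDerivAt
    have h2 : HasDerivAt (fun t : ℝ => c * (t : ℂ)) c t := by simpa using h1.const_mul c
    have h3 := (Complex.hasDerivAt_exp (c * t)).comp t h2
    have := h3.div_const c
    simpa [mul_comm, mul_div_assoc, mul_div_cancel_left₀ _ hc0] using this
  have htend : Tendsto (fun t : ℝ => Complex.exp (c * t) / c) atTop (nhds 0) := by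
    have : Tendsto (fun t : ℝ => Complex.exp (c * t)) atTop (nhds 0) := by
      rw [tendsto_zero_iff_norm_tendsto_zero]
      have : ∀ t : ℝ, ‖Complex.exp (c * t)‖ = Real.exp (c.re * t) := by
        intro t; rw [Complex.norm_exp]; simp [Complex.mul_re]
      simp_rw [this]
      exact Real.tendsto_exp_atBot.comp
        (Tendsto.const_mul_atTop_of_neg hc tendsto_id)
    simpa using this.div_const c
  have := integral_Ioi_of_hasDerivAt_of_tendsto' hderiv (integrableOn_cexp c hc) htend
  rw [this]
  simp [hc0, neg_div]

lemma integral_exp_cos (l x : ℝ) (hl : 0 < l) :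
    ∫ t in Ioi (0:ℝ), Real.exp (-l * t) * Real.cos (x * t) = l / (l ^ 2 + x ^ 2) := by
  have hre : ((-l : ℂ) + x * Complex.I).re < 0 := by simp [hl]
  have key := integral_cexp_Ioi ((-l : ℂ) + x * Complex.I) hre
  have hint : IntegrableOn (fun t : ℝ => Complex.exp (((-l : ℂ) + x * Complex.I) * t)) (Ioi 0) :=
    integrableOn_cexp _ hre
  have hre_eq : ∀ t : ℝ, (Complex.exp (((-l : ℂ) + x * Complex.I) * t)).re
      = Real.exp (-l * t) * Real.cos (x * t) := by
    intro t
    rw [Complex.exp_re]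
    congr 1
    · simp [Complex.add_re, Complex.mul_re]
    · congr 1
      simp [Complex.add_im, Complex.mul_im]
  have h1 : ∫ t in Ioi (0:ℝ), Real.exp (-l * t) * Real.cos (x * t)
      = (∫ t in Ioi (0:ℝ), Complex.exp (((-l : ℂ) + x * Complex.I) * t)).re := by
    rw [← RCLike.re_eq_complex_re, ← integral_re hint]
    · simp_rw [RCLike.re_eq_complex_re, hre_eq]
  rw [h1, key]
  have hd : ((-l : ℂ) + x * Complex.I) ≠ 0 := fun h => by
    have := congrArg Complex.re h; simp at this; linarith
  rw [div_eq_mul_inv, Complex.inv_def]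
  simp [Complex.normSq_apply, Complex.mul_re]
  rw [div_eq_mul_inv]; ring_nf

lemma integral_exp_sin (l x : ℝ) (hl : 0 < l) :
    ∫ t in Ioi (0:ℝ), Real.exp (-l * t) * Real.sin (x * t) = x / (l ^ 2 + x ^ 2) := by
  have hre : ((-l : ℂ) + x * Complex.I).re < 0 := by simp [hl]
  have key := integral_cexp_Ioi ((-l : ℂ) + x * Complex.I) hre
  have hint : IntegrableOn (fun t : ℝ => Complex.exp (((-l : ℂ) + x * Complex.I) * t)) (Ioi 0) :=
    integrableOn_cexp _ hre
  have him_eq : ∀ t : ℝ, (Complex.exp (((-l : ℂ) + x * Complex.I) * t)).im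
      = Real.exp (-l * t) * Real.sin (x * t) := by
    intro t
    rw [Complex.exp_im]
    congr 1
    · simp [Complex.add_re, Complex.mul_re]
    · congr 1
      simp [Complex.add_im, Complex.mul_im]
  have h1 : ∫ t in Ioi (0:ℝ), Real.exp (-l * t) * Real.sin (x * t)
      = (∫ t in Ioi (0:ℝ), Complex.exp (((-l : ℂ) + x * Complex.I) * t)).im := by
    rw [← RCLike.im_eq_complex_im, ← integral_im hint]
    simp_rw [RCLike.im_eq_complex_im, him_eq]
  rw [h1, key]
  have hd : ((-l : ℂ) + x * Complex.I) ≠ 0 := fun h => by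
    have := congrArg Complex.re h; simp at this; linarith
  rw [div_eq_mul_inv, Complex.inv_def]
  simp [Complex.normSq_apply, Complex.mul_im]
  rw [div_eq_mul_inv]; ring_nf

lemma integral_exp_Ioi (u : ℝ) (hu : 0 < u) :
    ∫ t in Ioi (0:ℝ), Real.exp (-u * t) = 1 / u := by
  have h := integral_exp_cos u 0 hu
  simp_rw [zero_mul, Real.cos_zero, mul_one] at h
  rw [h]
  rw [show (0:ℝ)^2 = 0 by ring, add_zero, sq]
  rw [div_mul_eq_div_div, div_self (ne_of_gt hu)]

lemma one_sub_exp_neg_le (u : ℝ) (hu : 0 ≤ u) : 1 - Real.exp (-u) ≤ u := by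
  have := Real.add_one_le_exp (-u)
  linarith

lemma exp_diff_nonneg {p q t : ℝ} (hpq : p ≤ q) (ht : 0 ≤ t) :
    0 ≤ Real.exp (-p * t) - Real.exp (-q * t) := by
  have : -q * t ≤ -p * t := by nlinarith
  linarith [Real.exp_le_exp.mpr this]

lemma exp_diff_le {p q t : ℝ} (hpq : p ≤ q) (ht : 0 ≤ t) :
    Real.exp (-p * t) - Real.exp (-q * t) ≤ (q - p) * t * Real.exp (-p * t) := by
  have h1 : Real.exp (-q * t) = Real.exp (-p * t) * Real.exp (-((q - p) * t)) := by
    rw [← Real.exp_add]; ring_nf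
  rw [h1]
  have h2 : 1 - Real.exp (-((q - p) * t)) ≤ (q - p) * t :=
    one_sub_exp_neg_le _ (by nlinarith)
  nlinarith [Real.exp_pos (-p * t)]

lemma exp_diff_le_exp {p q t : ℝ} (hpq : p ≤ q) (ht : 0 ≤ t) :
    Real.exp (-p * t) - Real.exp (-q * t) ≤ Real.exp (-p * t) := by
  have := Real.exp_pos (-q * t); linarith

lemma contOn_exp_diff_div (p q : ℝ) :
    ContinuousOn (fun t : ℝ => (Real.exp (-p * t) - Real.exp (-q * t)) / t) (Ioi (0:ℝ)) := by
  apply ContinuousOn.div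
  · exact Continuous.continuousOn (by continuity)
  · exact continuousOn_id
  · exact fun t ht => ne_of_gt ht

/-- integrability of `(exp (-p t) - exp (-q t))/t` on `(0, ∞)`, for `0 < p ≤ q`. -/
lemma integrableOn_exp_diff_div {p q : ℝ} (hp : 0 < p) (hpq : p ≤ q) :
    IntegrableOn (fun t : ℝ => (Real.exp (-p * t) - Real.exp (-q * t)) / t) (Ioi (0:ℝ)) := by
  have hmeas : AEStronglyMeasurable (fun t : ℝ => (Real.exp (-p * t) - Real.exp (-q * t)) / t)
      (volume.restrict (Ioi (0:ℝ))) :=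
    (contOn_exp_diff_div p q).aestronglyMeasurable measurableSet_Ioi
  have hbd : IntegrableOn (fun t : ℝ => (q - p) * Real.exp (-p * t)) (Ioi (0:ℝ)) :=
    (exp_neg_integrableOn_Ioi 0 hp).const_mul _
  refine Integrable.mono' hbd hmeas ?_
  rw [ae_restrict_iff' measurableSet_Ioi]
  refine Eventually.of_forall fun t ht => ?_
  have ht' : (0:ℝ) < t := ht
  rw [Real.norm_eq_abs, abs_div, abs_of_nonneg (exp_diff_nonneg hpq ht'.le),
    abs_of_pos ht', div_le_iff₀ ht']
  calc Real.exp (-p * t) - Real.exp (-q * t) ≤ (q - p) * t * Real.exp (-p * t) :=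
        exp_diff_le hpq ht'.le
    _ = (q - p) * Real.exp (-p * t) * t := by ring

/-- Frullani's integral for exponentials. -/
lemma frullani {l m : ℝ} (hl : 0 < l) (hlm : l ≤ m) :
    ∫ t in Ioi (0:ℝ), (Real.exp (-l * t) - Real.exp (-m * t)) / t
      = Real.log m - Real.log l := by
  have hm : 0 < m := lt_of_lt_of_le hl hlm
  set F : ℝ → ℝ := fun u => ∫ t in Ioi (0:ℝ), (Real.exp (-u * t) - Real.exp (-m * t)) / t
    with hF
  have hderiv : ∀ u ∈ Icc l m, HasDerivAt F (-(1/u)) u := by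
    intro u hu
    have hu0 : 0 < u := lt_of_lt_of_le hl hu.1
    have hε : (0:ℝ) < l/2 := by linarith
    have key := hasDerivAt_integral_of_dominated_loc_of_deriv_le (Metric.ball_mem_nhds u hε)
      (F := fun (u : ℝ) (t : ℝ) => (Real.exp (-u * t) - Real.exp (-m * t)) / t)
      (F' := fun (u : ℝ) (t : ℝ) => -Real.exp (-u * t))
      (bound := fun t => Real.exp (-(l/2) * t))
      (μ := volume.restrict (Ioi (0:ℝ))) (x₀ := u)
      (Eventually.of_forall fun v =>
        ((contOn_exp_diff_div v m).aestronglyMeasurable measurableSet_Ioi :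
          AEStronglyMeasurable _ (volume.restrict (Ioi (0:ℝ)))))
      (integrableOn_exp_diff_div hu0 hu.2)
      (((Real.continuous_exp.comp (continuous_const.mul continuous_id)).neg).aestronglyMeasurable)
      ?_ (exp_neg_integrableOn_Ioi 0 hε) ?_
    · have hval : ∫ t in Ioi (0:ℝ), -Real.exp (-u * t) = -(1/u) := by
        rw [integral_neg, integral_exp_Ioi u hu0]
      rw [← hval]
      exact key.2
    · rw [ae_restrict_iff' measurableSet_Ioi]
      refine Eventually.of_forall fun t ht => ?_
      intro v hv
      have ht' : (0:ℝ) < t := ht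
      have hv' : l/2 ≤ v := by
        have := abs_lt.mp (mem_ball_iff_norm.mp hv)
        have h1 := hu.1
        linarith [this.1]
      rw [Real.norm_eq_abs, abs_neg, Real.abs_exp, Real.exp_le_exp]
      nlinarith
    · rw [ae_restrict_iff' measurableSet_Ioi]
      refine Eventually.of_forall fun t ht => ?_
      intro v _
      have ht' : (0:ℝ) < t := ht
      have h1 : HasDerivAt (fun u : ℝ => -u * t) (-1 * t) v :=
        ((hasDerivAt_id v).neg).mul_const t
      have h2 := (h1.exp.sub_const (Real.exp (-m * t))).div_const t
      exact h2.congr_deriv (by field_simp)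
  -- F is constant + log
  have hzero : F m = 0 := by
    rw [hF]
    simp
  have hHderiv : ∀ u ∈ Icc l m, HasDerivWithinAt (fun u => F u + Real.log u) 0 (Icc l m) u := by
    intro u hu
    have hu0 : 0 < u := lt_of_lt_of_le hl hu.1
    have := (hderiv u hu).add (Real.hasDerivAt_log (ne_of_gt hu0))
    have h0 : -(1/u) + u⁻¹ = 0 := by field_simp; ring
    rw [h0] at this
    exact this.hasDerivWithinAt
  have hconst := Convex.norm_image_sub_le_of_norm_hasDerivWithin_le (C := 0) hHderiv
    (fun u _ => by simp) (convex_Icc l m) (left_mem_Icc.mpr hlm) (right_mem_Icc.mpr hlm)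
  simp only [zero_mul, norm_le_zero_iff, sub_eq_zero] at hconst
  have : F m + Real.log m = F l + Real.log l := hconst
  rw [hzero] at this
  have : F l = Real.log m - Real.log l := by linarith
  exact this

lemma intOn_exp_sin (l s : ℝ) (hl : 0 < l) :
    IntegrableOn (fun t : ℝ => Real.exp (-l * t) * Real.sin (s * t)) (Ioi (0:ℝ)) := by
  refine Integrable.mono' (exp_neg_integrableOn_Ioi 0 hl)
    (Continuous.aestronglyMeasurable (by continuity)) ?_
  refine Eventually.of_forall fun t => ?_
  rw [Real.norm_eq_abs, abs_mul, Real.abs_exp]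
  exact mul_le_of_le_one_right (Real.exp_pos _).le (Real.abs_sin_le_one (s*t))

lemma intOn_exp_cos (l s : ℝ) (hl : 0 < l) :
    IntegrableOn (fun t : ℝ => Real.exp (-l * t) * Real.cos (s * t)) (Ioi (0:ℝ)) := by
  refine Integrable.mono' (exp_neg_integrableOn_Ioi 0 hl)
    (Continuous.aestronglyMeasurable (by continuity)) ?_
  refine Eventually.of_forall fun t => ?_
  rw [Real.norm_eq_abs, abs_mul, Real.abs_exp]
  exact mul_le_of_le_one_right (Real.exp_pos _).le (Real.abs_cos_le_one (s*t))

lemma intOn_w_cos {l m : ℝ} (hl : 0 < l) (hlm : l ≤ m) (s : ℝ) :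
    IntegrableOn (fun t : ℝ =>
      2 * ((Real.exp (-l * t) - Real.exp (-m * t)) / t) * Real.cos (s * t)) (Ioi (0:ℝ)) := by
  have hw : IntegrableOn (fun t : ℝ => 2 * ((Real.exp (-l * t) - Real.exp (-m * t)) / t))
      (Ioi (0:ℝ)) := (integrableOn_exp_diff_div hl hlm).const_mul 2
  refine Integrable.mono' hw.abs ?_ ?_
  · apply ContinuousOn.aestronglyMeasurable _ measurableSet_Ioi
    exact ((continuousOn_const.mul (contOn_exp_diff_div l m)).mul
      (Continuous.continuousOn (by continuity)))
  · refine Eventually.of_forall fun t => ?_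
    rw [Real.norm_eq_abs, abs_mul]
    exact mul_le_of_le_one_right (abs_nonneg _) (Real.abs_cos_le_one (s*t))

lemma g2_eq {l m : ℝ} (hl : 0 < l) (hlm : l ≤ m) (x : ℝ) :
    ∫ t in Ioi (0:ℝ), 2 * ((Real.exp (-l * t) - Real.exp (-m * t)) / t) * Real.cos (x * t)
      = Real.log (m ^ 2 + x ^ 2) - Real.log (l ^ 2 + x ^ 2) := by
  have hm : 0 < m := lt_of_lt_of_le hl hlm
  set G : ℝ → ℝ := fun u => ∫ t in Ioi (0:ℝ),
    2 * ((Real.exp (-l * t) - Real.exp (-m * t)) / t) * Real.cos (u * t) with hG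
  set R : ℝ → ℝ := fun u => Real.log (m ^ 2 + u ^ 2) - Real.log (l ^ 2 + u ^ 2) with hR
  have hGderiv : ∀ u : ℝ, HasDerivAt G (2*u/(m^2+u^2) - 2*u/(l^2+u^2)) u := by
    intro u
    have key := hasDerivAt_integral_of_dominated_loc_of_deriv_le (Metric.ball_mem_nhds u one_pos)
      (F := fun (u : ℝ) (t : ℝ) =>
        2 * ((Real.exp (-l * t) - Real.exp (-m * t)) / t) * Real.cos (u * t))
      (F' := fun (u : ℝ) (t : ℝ) =>
        -(2 * (Real.exp (-l * t) - Real.exp (-m * t)) * Real.sin (u * t)))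
      (bound := fun t => 2 * Real.exp (-l * t))
      (μ := volume.restrict (Ioi (0:ℝ))) (x₀ := u)
      (Eventually.of_forall fun v => (intOn_w_cos hl hlm v).aestronglyMeasurable)
      (intOn_w_cos hl hlm u)
      (Continuous.aestronglyMeasurable (by continuity))
      ?_ ((exp_neg_integrableOn_Ioi 0 hl).const_mul 2) ?_
    · have hval : ∫ t in Ioi (0:ℝ),
          -(2 * (Real.exp (-l * t) - Real.exp (-m * t)) * Real.sin (u * t))
          = 2*u/(m^2+u^2) - 2*u/(l^2+u^2) := by
        have heq : (fun t : ℝ => -(2 * (Real.exp (-l * t) - Real.exp (-m * t)) * Real.sin (u * t)))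
            = fun t : ℝ => (-2) * (Real.exp (-l * t) * Real.sin (u * t))
              + 2 * (Real.exp (-m * t) * Real.sin (u * t)) := by
          funext t; ring
        rw [heq, integral_add ((intOn_exp_sin l u hl).const_mul _)
          ((intOn_exp_sin m u hm).const_mul _), integral_const_mul, integral_const_mul,
          integral_exp_sin l u hl, integral_exp_sin m u hm]
        field_simp
        ring
      rw [← hval]
      exact key.2
    · rw [ae_restrict_iff' measurableSet_Ioi]
      refine Eventually.of_forall fun t ht => ?_
      intro v _
      have ht' : (0:ℝ) < t := ht
      have hd0 : 0 ≤ Real.exp (-l * t) - Real.exp (-m * t) := exp_diff_nonneg hlm ht'.le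
      have h1 : |Real.sin (v*t)| ≤ 1 := Real.abs_sin_le_one _
      have h2 : Real.exp (-l * t) - Real.exp (-m * t) ≤ Real.exp (-l * t) := by
        have := Real.exp_pos (-m * t); linarith
      rw [Real.norm_eq_abs, abs_neg, abs_mul, abs_mul,
        abs_of_nonneg (by norm_num : (0:ℝ) ≤ 2), abs_of_nonneg hd0]
      calc 2 * (Real.exp (-l * t) - Real.exp (-m * t)) * |Real.sin (v * t)|
          ≤ 2 * (Real.exp (-l * t) - Real.exp (-m * t)) * 1 :=
            mul_le_mul_of_nonneg_left h1 (by linarith)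
        _ ≤ 2 * Real.exp (-l * t) := by linarith
    · rw [ae_restrict_iff' measurableSet_Ioi]
      refine Eventually.of_forall fun t ht => ?_
      intro v _
      have ht' : (0:ℝ) < t := ht
      have hc : HasDerivAt (fun u : ℝ => Real.cos (u * t)) (-Real.sin (v*t) * t) v :=
        (hasDerivAt_mul_const t).cos
      have := hc.const_mul (2 * ((Real.exp (-l * t) - Real.exp (-m * t)) / t))
      exact this.congr_deriv (by field_simp)
  have hRderiv : ∀ u : ℝ, HasDerivAt R (2*u/(m^2+u^2) - 2*u/(l^2+u^2)) u := by
    intro u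
    have h1 : HasDerivAt (fun u : ℝ => m ^ 2 + u ^ 2) (2*u) u := by
      simpa using (hasDerivAt_pow 2 u).const_add (m^2)
    have h2 : HasDerivAt (fun u : ℝ => l ^ 2 + u ^ 2) (2*u) u := by
      simpa using (hasDerivAt_pow 2 u).const_add (l^2)
    have hm2 : m ^ 2 + u ^ 2 ≠ 0 := by positivity
    have hl2 : l ^ 2 + u ^ 2 ≠ 0 := by positivity
    exact (h1.log hm2).sub (h2.log hl2)
  have hconst : ∀ u : ℝ, G u - R u = G 0 - R 0 := by
    intro u
    have hd : Differentiable ℝ (fun u => G u - R u) :=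
      fun u => ((hGderiv u).sub (hRderiv u)).differentiableAt
    have hz : ∀ u : ℝ, deriv (fun u => G u - R u) u = 0 := by
      intro u
      have := ((hGderiv u).sub (hRderiv u))
      exact (by simpa using this.deriv : deriv (G - R) u = 0)
    exact is_const_of_deriv_eq_zero hd hz u 0
  have hG0 : G 0 = 2 * (Real.log m - Real.log l) := by
    rw [hG]
    simp_rw [zero_mul, Real.cos_zero, mul_one]
    have heq2 : (fun t : ℝ => 2 * ((Real.exp (-l * t) - Real.exp (-m * t)) / t))
        = fun t : ℝ => (2:ℝ) * ((Real.exp (-l * t) - Real.exp (-m * t)) / t) := rfl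
    rw [integral_const_mul, frullani hl hlm]
  have hR0 : R 0 = 2 * (Real.log m - Real.log l) := by
    rw [hR]
    simp only [ne_eq, OfNat.ofNat_ne_zero, not_false_eq_true, zero_pow, add_zero]
    rw [Real.log_pow, Real.log_pow]
    push_cast
    ring
  have := hconst x
  rw [hG0, hR0] at this
  have hfin : G x = R x := by linarith
  exact hfin

lemma integral_complex_ofReal {f : ℝ → ℝ} {μ : Measure ℝ} :
    ∫ t, ((f t : ℝ) : ℂ) ∂μ = ((∫ t, f t ∂μ : ℝ) : ℂ) :=
  integral_ofReal (𝕜 := ℂ)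

lemma posdef_integral {w : ℝ → ℝ} (hw_nonneg : ∀ t ∈ Ioi (0:ℝ), 0 ≤ w t)
    (hw_cos_int : ∀ s : ℝ, IntegrableOn (fun t => w t * Real.cos (s * t)) (Ioi (0:ℝ))) :
    IsPosDefFun (fun x => ((∫ t in Ioi (0:ℝ), w t * Real.cos (x * t) : ℝ) : ℂ)) := by
  intro n x c
  have hterm : ∀ i j : Fin n,
      c i * (starRingEnd ℂ) (c j) * ((∫ t in Ioi (0:ℝ), w t * Real.cos ((x i - x j) * t) : ℝ) : ℂ)
      = ∫ t in Ioi (0:ℝ), c i * (starRingEnd ℂ) (c j) * ((w t * Real.cos ((x i - x j) * t) : ℝ) : ℂ) := by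
    intro i j
    rw [← integral_complex_ofReal, ← integral_const_mul]
  simp_rw [hterm]
  have hint : ∀ i j : Fin n, Integrable
      (fun t => c i * (starRingEnd ℂ) (c j) * ((w t * Real.cos ((x i - x j) * t) : ℝ) : ℂ))
      (volume.restrict (Ioi (0:ℝ))) := by
    intro i j
    exact ((hw_cos_int (x i - x j)).ofReal).const_mul _
  have h1 : ∀ i : Fin n, (∑ j, ∫ t in Ioi (0:ℝ),
        c i * (starRingEnd ℂ) (c j) * ((w t * Real.cos ((x i - x j) * t) : ℝ) : ℂ))
      = ∫ t in Ioi (0:ℝ), ∑ j,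
        c i * (starRingEnd ℂ) (c j) * ((w t * Real.cos ((x i - x j) * t) : ℝ) : ℂ) :=
    fun i => (integral_finset_sum _ (fun j _ => hint i j)).symm
  rw [Finset.sum_congr rfl (fun i _ => h1 i),
    ← integral_finset_sum _ (fun i _ => integrable_finset_sum _ (fun j _ => hint i j))]
  have hpt : ∀ t : ℝ, (∑ i, ∑ j,
        c i * (starRingEnd ℂ) (c j) * ((w t * Real.cos ((x i - x j) * t) : ℝ) : ℂ))
      = ((w t * (Complex.normSq (∑ i, c i * (Real.cos (t * x i) : ℂ))
          + Complex.normSq (∑ i, c i * (Real.sin (t * x i) : ℂ))) : ℝ) : ℂ) := by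
    intro t
    have hterm2 : ∀ i j : Fin n,
        c i * (starRingEnd ℂ) (c j) * ((w t * Real.cos ((x i - x j) * t) : ℝ) : ℂ)
        = ((w t : ℝ) : ℂ) * (c i * (starRingEnd ℂ) (c j) * ((Real.cos (t * (x i - x j)) : ℝ) : ℂ)) := by
      intro i j
      rw [mul_comm (x i - x j) t]
      push_cast
      ring
    simp_rw [hterm2, ← Finset.mul_sum]
    rw [cos_sum_eq n x c t]
    push_cast
    ring
  simp_rw [hpt]
  rw [integral_complex_ofReal, Complex.zero_le_real]
  refine setIntegral_nonneg measurableSet_Ioi fun t ht => ?_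
  exact mul_nonneg (hw_nonneg t ht) (add_nonneg (Complex.normSq_nonneg _) (Complex.normSq_nonneg _))

lemma posdef_zero : IsPosDefFun (fun _ => (0 : ℂ)) := by
  have := posdef_const 0 le_rfl
  simpa using this

lemma posdef_sum {ι : Type*} (s : Finset ι) (g : ι → ℝ → ℂ)
    (h : ∀ i ∈ s, IsPosDefFun (g i)) : IsPosDefFun (fun x => ∑ i ∈ s, g i x) := by
  classical
  induction s using Finset.induction with
  | empty => simpa using posdef_zero
  | @insert a s' hnot ih =>
    simp_rw [Finset.sum_insert hnot]
    exact posdef_add (h a (Finset.mem_insert_self a s'))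
      (ih fun i hi => h i (Finset.mem_insert_of_mem hi))

lemma posdef_pow {k : ℝ → ℝ} (hk : IsPosDefFun fun x => ((k x : ℝ) : ℂ))
    (heven : ∀ x, k (-x) = k x) (m : ℕ) :
    IsPosDefFun fun x => ((k x ^ m : ℝ) : ℂ) := by
  induction m with
  | zero => simpa using posdef_const 1 zero_le_one
  | succ m ih =>
    have hfn : (fun x => ((k x ^ (m+1) : ℝ) : ℂ))
        = fun x => ((k x ^ m : ℝ) : ℂ) * ((k x : ℝ) : ℂ) := by
      funext x; push_cast; ring
    rw [hfn]
    refine posdef_mul ih hk fun x => ?_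
    rw [heven, Complex.conj_ofReal]

lemma posdef_exp {k : ℝ → ℝ} (hk : IsPosDefFun fun x => ((k x : ℝ) : ℂ))
    (heven : ∀ x, k (-x) = k x) :
    IsPosDefFun fun x => ((Real.exp (k x) : ℝ) : ℂ) := by
  have hN : ∀ N : ℕ, IsPosDefFun fun x => ((∑ m ∈ Finset.range N, k x ^ m / m.factorial : ℝ) : ℂ) := by
    intro N
    have hfn : (fun x => ((∑ m ∈ Finset.range N, k x ^ m / m.factorial : ℝ) : ℂ))
        = fun x => ∑ m ∈ Finset.range N,
            (((m.factorial : ℝ)⁻¹ : ℝ) : ℂ) * ((k x ^ m : ℝ) : ℂ) := by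
      funext x; push_cast; simp_rw [div_eq_inv_mul]
    rw [hfn]
    exact posdef_sum _ _ fun m _ =>
      posdef_smul (posdef_pow hk heven m) (by positivity)
  refine posdef_limit hN fun x => ?_
  have hsum : HasSum (fun m : ℕ => k x ^ m / m.factorial) (Real.exp (k x)) := by
    rw [Real.exp_eq_exp_ℝ]
    exact NormedSpace.expSeries_div_hasSum_exp (k x)
  have := hsum.tendsto_sum_nat
  exact (Complex.continuous_ofReal.tendsto _).comp this

lemma posdef_log_quot {l m : ℝ} (hl : 0 < l) (hlm : l ≤ m) :
    IsPosDefFun fun x : ℝ =>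
      ((Real.log (m ^ 2 + x ^ 2) - Real.log (l ^ 2 + x ^ 2) : ℝ) : ℂ) := by
  have h := posdef_integral (w := fun t => 2 * ((Real.exp (-l * t) - Real.exp (-m * t)) / t))
    (fun t ht => by
      have ht' : (0:ℝ) < t := ht
      have := exp_diff_nonneg hlm ht'.le
      positivity)
    (fun s => intOn_w_cos hl hlm s)
  have hfn : (fun x : ℝ => ((∫ t in Ioi (0:ℝ),
        2 * ((Real.exp (-l * t) - Real.exp (-m * t)) / t) * Real.cos (x * t) : ℝ) : ℂ))
      = fun x : ℝ => ((Real.log (m ^ 2 + x ^ 2) - Real.log (l ^ 2 + x ^ 2) : ℝ) : ℂ) := by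
    funext x
    rw [g2_eq hl hlm x]
  rw [← hfn]
  exact h

lemma posdef_factor {l m : ℝ} (hl : 0 < l) (hlm : l ≤ m) {r : ℝ} (hr : 0 ≤ r) :
    IsPosDefFun fun x : ℝ =>
      (((l ^ 2 * (m ^ 2 + x ^ 2) / (m ^ 2 * (l ^ 2 + x ^ 2))) ^ r : ℝ) : ℂ) := by
  have hm : 0 < m := lt_of_lt_of_le hl hlm
  have hkr : IsPosDefFun fun x : ℝ =>
      ((r * (Real.log (m ^ 2 + x ^ 2) - Real.log (l ^ 2 + x ^ 2)) : ℝ) : ℂ) := by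
    have := posdef_smul (posdef_log_quot hl hlm) hr
    have hfn : (fun x : ℝ => ((r : ℝ) : ℂ) *
          ((Real.log (m ^ 2 + x ^ 2) - Real.log (l ^ 2 + x ^ 2) : ℝ) : ℂ))
        = fun x : ℝ => ((r * (Real.log (m ^ 2 + x ^ 2) - Real.log (l ^ 2 + x ^ 2)) : ℝ) : ℂ) := by
      funext x; push_cast; ring
    rw [← hfn]
    exact this
  have heven : ∀ x : ℝ, r * (Real.log (m ^ 2 + (-x) ^ 2) - Real.log (l ^ 2 + (-x) ^ 2))
      = r * (Real.log (m ^ 2 + x ^ 2) - Real.log (l ^ 2 + x ^ 2)) := by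
    intro x; rw [neg_pow, pow_two]; ring_nf
  have hexp := posdef_exp hkr heven
  have hgpos : ∀ x : ℝ, 0 < l ^ 2 * (m ^ 2 + x ^ 2) / (m ^ 2 * (l ^ 2 + x ^ 2)) := by
    intro x; positivity
  have hfn : (fun x : ℝ =>
        (((l ^ 2 * (m ^ 2 + x ^ 2) / (m ^ 2 * (l ^ 2 + x ^ 2))) ^ r : ℝ) : ℂ))
      = fun x : ℝ => ((Real.exp (-(r * (Real.log (m ^ 2) - Real.log (l ^ 2)))) : ℝ) : ℂ) *
          ((Real.exp (r * (Real.log (m ^ 2 + x ^ 2) - Real.log (l ^ 2 + x ^ 2))) : ℝ) : ℂ) := by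
    funext x
    rw [← Complex.ofReal_mul]
    congr 1
    rw [← Real.exp_add, Real.rpow_def_of_pos (hgpos x)]
    congr 1
    have hlog : Real.log (l ^ 2 * (m ^ 2 + x ^ 2) / (m ^ 2 * (l ^ 2 + x ^ 2)))
        = Real.log (l ^ 2) + Real.log (m ^ 2 + x ^ 2)
          - (Real.log (m ^ 2) + Real.log (l ^ 2 + x ^ 2)) := by
      rw [Real.log_div (by positivity) (by positivity),
        Real.log_mul (by positivity) (by positivity),
        Real.log_mul (by positivity) (by positivity)]
    rw [hlog]
    ring
  rw [hfn]
  exact posdef_smul hexp (Real.exp_pos _).le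

/-- Euler-type product for `sinh`. -/
lemma sinh_prod (y : ℝ) : Tendsto (fun N : ℕ => y * ∏ j ∈ Finset.range N,
    (1 + y ^ 2 / (Real.pi ^ 2 * ((j : ℝ) + 1) ^ 2))) atTop (nhds (Real.sinh y)) := by
  have hπ : (Real.pi : ℝ) ≠ 0 := Real.pi_ne_zero
  set z : ℂ := ((y / Real.pi : ℝ) : ℂ) * Complex.I with hz
  have h1 := Complex.tendsto_euler_sin_prod z
  have hπz : (Real.pi : ℂ) * z = (y : ℂ) * Complex.I := by
    rw [hz, ← mul_assoc, ← Complex.ofReal_mul, mul_div_cancel₀ _ hπ]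
  have hsin : Complex.sin ((Real.pi : ℂ) * z) = ((Real.sinh y : ℝ) : ℂ) * Complex.I := by
    rw [hπz, Complex.sin_mul_I, Complex.ofReal_sinh]
  have hterm : ∀ N : ℕ, (Real.pi : ℂ) * z * ∏ j ∈ Finset.range N,
      (1 - z ^ 2 / ((j : ℂ) + 1) ^ 2)
      = ((y * ∏ j ∈ Finset.range N, (1 + y ^ 2 / (Real.pi ^ 2 * ((j : ℝ) + 1) ^ 2)) : ℝ) : ℂ)
        * Complex.I := by
    intro N
    rw [hπz]
    have hfac : ∀ j : ℕ, (1 : ℂ) - z ^ 2 / ((j : ℂ) + 1) ^ 2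
        = ((1 + y ^ 2 / (Real.pi ^ 2 * ((j : ℝ) + 1) ^ 2) : ℝ) : ℂ) := by
      intro j
      rw [hz]
      rw [mul_pow, Complex.I_sq]
      push_cast
      field_simp
      ring
    rw [Finset.prod_congr rfl (fun j _ => hfac j), ← Complex.ofReal_prod]
    push_cast
    ring
  rw [hsin] at h1
  have h2 := (h1.congr hterm).mul_const (-Complex.I)
  have hIc : ∀ w : ℂ, (w * Complex.I) * (-Complex.I) = w := by
    intro w
    rw [mul_assoc]
    simp [Complex.I_mul_I]
  simp_rw [hIc] at h2
  have h3 := (Complex.continuous_re.tendsto _).comp h2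
  rw [show ((Real.sinh y : ℝ) : ℂ).re = Real.sinh y from Complex.ofReal_re _] at h3
  exact h3.congr fun N => Complex.ofReal_re _

lemma prod_tendsto {a b : ℝ} (ha : 0 < a) (hb : 0 < b) {x : ℝ} (hx : x ≠ 0) :
    Tendsto (fun N : ℕ => ∏ j ∈ Finset.range N,
      ((Real.pi ^ 2 * ((j : ℝ) + 1) ^ 2 + a ^ 2 * x ^ 2)
        / (Real.pi ^ 2 * ((j : ℝ) + 1) ^ 2 + b ^ 2 * x ^ 2))) atTop
      (nhds (b * Real.sinh (a * x) / (a * Real.sinh (b * x)))) := by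
  have hπ : (0:ℝ) < Real.pi := Real.pi_pos
  have hA := sinh_prod (a * x)
  have hB := sinh_prod (b * x)
  have hBne : Real.sinh (b * x) ≠ 0 := by
    rw [Real.sinh_ne_zero]
    exact mul_ne_zero (ne_of_gt hb) hx
  have hquot := (hA.div hB hBne).const_mul (b / a)
  have heq : ∀ N : ℕ, (b / a) * ((a * x * ∏ j ∈ Finset.range N,
        (1 + (a*x) ^ 2 / (Real.pi ^ 2 * ((j : ℝ) + 1) ^ 2)))
      / (b * x * ∏ j ∈ Finset.range N,
        (1 + (b*x) ^ 2 / (Real.pi ^ 2 * ((j : ℝ) + 1) ^ 2))))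
      = ∏ j ∈ Finset.range N,
        ((Real.pi ^ 2 * ((j : ℝ) + 1) ^ 2 + a ^ 2 * x ^ 2)
          / (Real.pi ^ 2 * ((j : ℝ) + 1) ^ 2 + b ^ 2 * x ^ 2)) := by
    intro N
    have hPB : (0:ℝ) < ∏ j ∈ Finset.range N,
        (1 + (b*x) ^ 2 / (Real.pi ^ 2 * ((j : ℝ) + 1) ^ 2)) :=
      Finset.prod_pos fun j _ => by positivity
    have hfac : ∀ j ∈ Finset.range N,
        (1 + (a*x) ^ 2 / (Real.pi ^ 2 * ((j : ℝ) + 1) ^ 2))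
          / (1 + (b*x) ^ 2 / (Real.pi ^ 2 * ((j : ℝ) + 1) ^ 2))
        = (Real.pi ^ 2 * ((j : ℝ) + 1) ^ 2 + a ^ 2 * x ^ 2)
          / (Real.pi ^ 2 * ((j : ℝ) + 1) ^ 2 + b ^ 2 * x ^ 2) := by
      intro j _
      have h1 : Real.pi ^ 2 * ((j : ℝ) + 1) ^ 2 ≠ 0 := by positivity
      have h2 : Real.pi ^ 2 * ((j : ℝ) + 1) ^ 2 + b ^ 2 * x ^ 2 ≠ 0 := by positivity
      field_simp
    calc (b / a) * ((a * x * ∏ j ∈ Finset.range N,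
          (1 + (a*x) ^ 2 / (Real.pi ^ 2 * ((j : ℝ) + 1) ^ 2)))
        / (b * x * ∏ j ∈ Finset.range N,
          (1 + (b*x) ^ 2 / (Real.pi ^ 2 * ((j : ℝ) + 1) ^ 2))))
        = (∏ j ∈ Finset.range N, (1 + (a*x) ^ 2 / (Real.pi ^ 2 * ((j : ℝ) + 1) ^ 2)))
          / (∏ j ∈ Finset.range N, (1 + (b*x) ^ 2 / (Real.pi ^ 2 * ((j : ℝ) + 1) ^ 2))) := by
          field_simp
      _ = ∏ j ∈ Finset.range N,
          ((1 + (a*x) ^ 2 / (Real.pi ^ 2 * ((j : ℝ) + 1) ^ 2))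
            / (1 + (b*x) ^ 2 / (Real.pi ^ 2 * ((j : ℝ) + 1) ^ 2))) :=
          (Finset.prod_div_distrib _ _).symm
      _ = _ := Finset.prod_congr rfl hfac
  have hlim : (b / a) * (Real.sinh (a*x) / Real.sinh (b*x))
      = b * Real.sinh (a * x) / (a * Real.sinh (b * x)) := by
    rw [div_mul_div_comm]
  rw [← hlim]
  exact hquot.congr heq

lemma posdef_partial {a b : ℝ} (ha : 0 < a) (hb : 0 < b) (hab : a ≤ b) {r : ℝ} (hr : 0 ≤ r)
    (N : ℕ) : IsPosDefFun fun x : ℝ => (((∏ j ∈ Finset.range N,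
      ((Real.pi ^ 2 * ((j : ℝ) + 1) ^ 2 + a ^ 2 * x ^ 2)
        / (Real.pi ^ 2 * ((j : ℝ) + 1) ^ 2 + b ^ 2 * x ^ 2))) ^ r : ℝ) : ℂ) := by
  have hπ : (0:ℝ) < Real.pi := Real.pi_pos
  have hratio_nonneg : ∀ (j : ℕ) (x : ℝ), 0 ≤ (Real.pi ^ 2 * ((j : ℝ) + 1) ^ 2 + a ^ 2 * x ^ 2)
      / (Real.pi ^ 2 * ((j : ℝ) + 1) ^ 2 + b ^ 2 * x ^ 2) := by
    intro j x; positivity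
  have hsplit : (fun x : ℝ => (((∏ j ∈ Finset.range N,
      ((Real.pi ^ 2 * ((j : ℝ) + 1) ^ 2 + a ^ 2 * x ^ 2)
        / (Real.pi ^ 2 * ((j : ℝ) + 1) ^ 2 + b ^ 2 * x ^ 2))) ^ r : ℝ) : ℂ))
      = fun x : ℝ => ((∏ j ∈ Finset.range N,
        ((Real.pi ^ 2 * ((j : ℝ) + 1) ^ 2 + a ^ 2 * x ^ 2)
          / (Real.pi ^ 2 * ((j : ℝ) + 1) ^ 2 + b ^ 2 * x ^ 2)) ^ r : ℝ) : ℂ) := by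
    funext x
    rw [← Real.finset_prod_rpow _ _ (fun j _ => hratio_nonneg j x) r]
  rw [hsplit]
  clear hsplit
  induction N with
  | zero => simpa using posdef_const 1 zero_le_one
  | succ N ih =>
    have hstep : (fun x : ℝ => ((∏ j ∈ Finset.range (N+1),
        ((Real.pi ^ 2 * ((j : ℝ) + 1) ^ 2 + a ^ 2 * x ^ 2)
          / (Real.pi ^ 2 * ((j : ℝ) + 1) ^ 2 + b ^ 2 * x ^ 2)) ^ r : ℝ) : ℂ))
        = fun x : ℝ => ((∏ j ∈ Finset.range N,
          ((Real.pi ^ 2 * ((j : ℝ) + 1) ^ 2 + a ^ 2 * x ^ 2)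
            / (Real.pi ^ 2 * ((j : ℝ) + 1) ^ 2 + b ^ 2 * x ^ 2)) ^ r : ℝ) : ℂ)
          * ((((Real.pi ^ 2 * ((N : ℝ) + 1) ^ 2 + a ^ 2 * x ^ 2)
            / (Real.pi ^ 2 * ((N : ℝ) + 1) ^ 2 + b ^ 2 * x ^ 2)) ^ r : ℝ) : ℂ) := by
      funext x
      rw [Finset.prod_range_succ]
      push_cast
      ring
    rw [hstep]
    set l : ℝ := Real.pi * ((N : ℝ) + 1) / b with hl
    set m : ℝ := Real.pi * ((N : ℝ) + 1) / a with hm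
    have hl0 : 0 < l := by rw [hl]; positivity
    have hlm : l ≤ m := by
      rw [hl, hm, div_le_div_iff₀ hb ha]
      have h1 : 0 ≤ Real.pi * ((N : ℝ) + 1) := by positivity
      nlinarith
    have hfactor : ∀ x : ℝ, (Real.pi ^ 2 * ((N : ℝ) + 1) ^ 2 + a ^ 2 * x ^ 2)
        / (Real.pi ^ 2 * ((N : ℝ) + 1) ^ 2 + b ^ 2 * x ^ 2)
        = l ^ 2 * (m ^ 2 + x ^ 2) / (m ^ 2 * (l ^ 2 + x ^ 2)) := by
      intro x
      rw [hl, hm]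
      have h1 : Real.pi ^ 2 * ((N : ℝ) + 1) ^ 2 + b ^ 2 * x ^ 2 ≠ 0 := by positivity
      have h2 : a ≠ 0 := ne_of_gt ha
      have h3 : b ≠ 0 := ne_of_gt hb
      have h4 : (Real.pi * ((N:ℝ)+1) / a) ^ 2 * ((Real.pi * ((N:ℝ)+1) / b) ^ 2 + x ^ 2) ≠ 0 := by
        positivity
      field_simp
    have hfPD := posdef_factor hl0 hlm hr
    refine posdef_mul ih ?_ ?_
    · have : (fun x : ℝ => ((((Real.pi ^ 2 * ((N : ℝ) + 1) ^ 2 + a ^ 2 * x ^ 2)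
          / (Real.pi ^ 2 * ((N : ℝ) + 1) ^ 2 + b ^ 2 * x ^ 2)) ^ r : ℝ) : ℂ))
          = fun x : ℝ => (((l ^ 2 * (m ^ 2 + x ^ 2) / (m ^ 2 * (l ^ 2 + x ^ 2))) ^ r : ℝ) : ℂ) := by
        funext x
        rw [hfactor x]
      rw [this]
      exact hfPD
    · intro x
      rw [Complex.conj_ofReal]
      congr 2
      rw [neg_pow]
      ring_nf

lemma forward {a b : ℝ} (ha : 0 < a) (hb : 0 < b) (hab : a ≤ b) (f : ℝ → ℝ)
    (hf : ∀ x : ℝ, x ≠ 0 → f x = b * Real.sinh (a * x) / (a * Real.sinh (b * x)))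
    (hf0 : f 0 = 1) : IsInfDivFun f := by
  intro r hr
  refine posdef_limit (φ := fun N x => (((∏ j ∈ Finset.range N,
      ((Real.pi ^ 2 * ((j : ℝ) + 1) ^ 2 + a ^ 2 * x ^ 2)
        / (Real.pi ^ 2 * ((j : ℝ) + 1) ^ 2 + b ^ 2 * x ^ 2))) ^ r : ℝ) : ℂ))
    (fun N => posdef_partial ha hb hab hr.le N) ?_
  intro x
  by_cases hx : x = 0
  · subst hx
    have hone : ∀ N : ℕ, (((∏ j ∈ Finset.range N,
        ((Real.pi ^ 2 * ((j : ℝ) + 1) ^ 2 + a ^ 2 * (0:ℝ) ^ 2)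
          / (Real.pi ^ 2 * ((j : ℝ) + 1) ^ 2 + b ^ 2 * (0:ℝ) ^ 2))) ^ r : ℝ) : ℂ) = 1 := by
      intro N
      have : ∀ j ∈ Finset.range N, (Real.pi ^ 2 * ((j : ℝ) + 1) ^ 2 + a ^ 2 * (0:ℝ) ^ 2)
          / (Real.pi ^ 2 * ((j : ℝ) + 1) ^ 2 + b ^ 2 * (0:ℝ) ^ 2) = 1 := by
        intro j _
        have h1 : Real.pi ^ 2 * ((j : ℝ) + 1) ^ 2 ≠ 0 := by positivity
        simp [div_self h1]
      rw [Finset.prod_congr rfl this]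
      simp [Real.one_rpow]
    simp_rw [hone, hf0, Real.one_rpow]
    push_cast
    exact tendsto_const_nhds
  · have hT := prod_tendsto ha hb hx
    have hcont : ContinuousAt (fun y : ℝ => y ^ r) (b * Real.sinh (a * x) / (a * Real.sinh (b * x))) :=
      Real.continuousAt_rpow_const _ r (Or.inr hr.le)
    have h2 := (hcont.tendsto.comp hT)
    rw [← hf x hx] at h2
    exact (Complex.continuous_ofReal.tendsto _).comp h2

lemma reverse {a b : ℝ} (ha : 0 < a) (hb : 0 < b) (f : ℝ → ℝ)
    (hf : ∀ x : ℝ, x ≠ 0 → f x = b * Real.sinh (a * x) / (a * Real.sinh (b * x)))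
    (hf0 : f 0 = 1) (hPD : IsPosDefFun fun x => ((f x : ℝ) : ℂ)) : a ≤ b := by
  by_contra hab
  push_neg at hab
  have feven : ∀ t : ℝ, f (-t) = f t := by
    intro t
    by_cases ht : t = 0
    · subst ht; simp
    · rw [hf _ (neg_ne_zero.mpr ht), hf _ ht]
      rw [mul_neg, mul_neg, Real.sinh_neg, Real.sinh_neg]
      ring
  have hbound : ∀ t : ℝ, f t ≤ 1 := by
    intro t
    have h := hPD 2 ![0, t] ![1, -1]
    have hsum : (∑ i, ∑ j, (![1, -1] : Fin 2 → ℂ) i * (starRingEnd ℂ) ((![1, -1] : Fin 2 → ℂ) j)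
        * ((f ((![0, t] : Fin 2 → ℝ) i - (![0, t] : Fin 2 → ℝ) j) : ℝ) : ℂ))
        = ((2 - 2 * f t : ℝ) : ℂ) := by
      rw [Fin.sum_univ_two, Fin.sum_univ_two, Fin.sum_univ_two]
      simp only [Matrix.cons_val_zero, Matrix.cons_val_one, Matrix.head_cons, sub_self, sub_zero,
        zero_sub, hf0, feven, map_one, map_neg, mul_one, mul_neg, one_mul, neg_neg]
      push_cast
      ring
    rw [hsum] at h
    rw [Complex.zero_le_real] at h
    linarith
  -- find t with f t > 1
  have hgrow : Tendsto (fun t : ℝ => Real.exp (b * t) * (b * Real.exp ((a - b) * t) - a))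
      atTop atTop := by
    refine Tendsto.atTop_mul_atTop₀ ?_ ?_
    · exact Real.tendsto_exp_atTop.comp (tendsto_id.const_mul_atTop hb)
    · have h1 : Tendsto (fun t : ℝ => b * Real.exp ((a - b) * t)) atTop atTop :=
        (Real.tendsto_exp_atTop.comp (tendsto_id.const_mul_atTop (by linarith))).const_mul_atTop hb
      have := tendsto_atTop_add_const_right atTop (-a) h1
      simpa [sub_eq_add_neg] using this
  have hev := (hgrow.eventually_gt_atTop b).and (eventually_gt_atTop 0)
  obtain ⟨t, htbig, ht0⟩ := hev.exists
  have hmul : Real.exp (b * t) * Real.exp ((a - b) * t) = Real.exp (a * t) := by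
    rw [← Real.exp_add]; ring_nf
  have hkey : a * Real.sinh (b * t) < b * Real.sinh (a * t) := by
    rw [Real.sinh_eq, Real.sinh_eq]
    have h1 : Real.exp (-(a * t)) ≤ 1 := Real.exp_le_one_iff.mpr (by nlinarith)
    have h2 : 0 < Real.exp (-(b * t)) := Real.exp_pos _
    have h3 : b * Real.exp (a * t) - a * Real.exp (b * t) > b := by nlinarith
    nlinarith
  have hft : 1 < f t := by
    rw [hf t (ne_of_gt ht0)]
    rw [lt_div_iff₀ (by positivity : 0 < a * Real.sinh (b * t))]
    · linarith
  exact absurd (hbound t) (not_le.mpr hft)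

end SinhPD

theorem sinh_quotient_posdef_iff (a b : ℝ) (ha : 0 < a) (hb : 0 < b)
    (f : ℝ → ℝ)
    (hf : ∀ x : ℝ, x ≠ 0 → f x = b * Real.sinh (a * x) / (a * Real.sinh (b * x)))
    (hf0 : f 0 = 1) :
    (a ≤ b ↔ IsPosDefFun fun x => (f x : ℂ)) ∧ (a ≤ b ↔ IsInfDivFun f) := by
  have hfwd : a ≤ b → IsInfDivFun f := fun hab => SinhPD.forward ha hb hab f hf hf0
  have hrev : IsPosDefFun (fun x => (f x : ℂ)) → a ≤ b := fun h =>
    SinhPD.reverse ha hb f hf hf0 h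
  have h21 : IsInfDivFun f → IsPosDefFun fun x => (f x : ℂ) := by
    intro h
    have h1 := h 1 one_pos
    have heq : (fun x => ((f x ^ (1:ℝ) : ℝ) : ℂ)) = fun x => ((f x : ℝ) : ℂ) := by
      funext x; rw [Real.rpow_one]
    rwa [heq] at h1
  exact ⟨⟨fun hab => h21 (hfwd hab), hrev⟩, ⟨hfwd, fun h => hrev (h21 h)⟩⟩
end

section
/- Let a_i ≥ a_i' > 0 and 0 < b_i ≤ b_i' for i = 1,…,n. If the function x ↦ ∏_{i=1}^n sinh(a_i'·x)/sinh(b_i'·x) (extended by continuity at x = 0) is not positive definite, then the function x ↦ ∏_{i=1}^n sinh(a_i·x)/sinh(b_i·x) (extended by continuity at x = 0) is not positive definite. -/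
open scoped ComplexOrder

/-- The function `x ↦ ∏ i, sinh (a i * x) / sinh (b i * x)`, extended by continuity
at `x = 0` (where it takes the value `∏ i, a i / b i`). -/
noncomputable def sinhProd {n : ℕ} (a b : Fin n → ℝ) (x : ℝ) : ℝ :=
  if x = 0 then ∏ i, a i / b i else ∏ i, Real.sinh (a i * x) / Real.sinh (b i * x)

open Finset Complex Real Filter MeasureTheory

section Aux

lemma resum_cos_nonneg (w : ℝ) (n : ℕ) (x : Fin n → ℝ) (c : Fin n → ℂ) :
    0 ≤ ∑ i, ∑ j, (c i * (starRingEnd ℂ) (c j)).re * Real.cos (w * (x i - x j)) := by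
  set p : Fin n → ℝ := fun i => (c i).re
  set q : Fin n → ℝ := fun i => (c i).im
  set u : Fin n → ℝ := fun i => Real.cos (w * x i)
  set v : Fin n → ℝ := fun i => Real.sin (w * x i)
  have expand : ∀ i j : Fin n, (c i * (starRingEnd ℂ) (c j)).re * Real.cos (w * (x i - x j))
      = (p i * u i) * (p j * u j) + (p i * v i) * (p j * v j)
        + (q i * u i) * (q j * u j) + (q i * v i) * (q j * v j) := by
    intro i j
    have hc : w * (x i - x j) = w * x i - w * x j := by ring
    rw [hc, Real.cos_sub, Complex.mul_re]
    simp only [Complex.conj_re, Complex.conj_im, p, q, u, v]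
    ring
  simp_rw [expand, Finset.sum_add_distrib]
  have sq : ∀ g : Fin n → ℝ, 0 ≤ ∑ i, ∑ j, g i * g j := by
    intro g
    rw [← Finset.sum_mul_sum]
    exact mul_self_nonneg _
  have h1 := sq (fun i => p i * u i)
  have h2 := sq (fun i => p i * v i)
  have h3 := sq (fun i => q i * u i)
  have h4 := sq (fun i => q i * v i)
  positivity

lemma pd_of_re {f : ℝ → ℝ} (heven : ∀ x, f (-x) = f x)
    (h : ∀ (n : ℕ) (x : Fin n → ℝ) (c : Fin n → ℂ),
      0 ≤ ∑ i, ∑ j, (c i * (starRingEnd ℂ) (c j)).re * f (x i - x j)) :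
    IsPosDefFun (fun x => (f x : ℂ)) := by
  intro n x c
  rw [Complex.le_def]
  have expand_re : ∀ i j : Fin n, (c i * (starRingEnd ℂ) (c j) * ((f (x i - x j)):ℂ)).re
      = (c i * (starRingEnd ℂ) (c j)).re * f (x i - x j) := by
    intro i j; rw [Complex.mul_re]; simp
  have expand_im : ∀ i j : Fin n, (c i * (starRingEnd ℂ) (c j) * ((f (x i - x j)):ℂ)).im
      = (c i * (starRingEnd ℂ) (c j)).im * f (x i - x j) := by
    intro i j; rw [Complex.mul_im]; simp
  set t : Fin n → Fin n → ℝ :=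
    fun i j => (c i * (starRingEnd ℂ) (c j)).im * f (x i - x j) with ht
  have key : ∀ i j, t i j = -(t j i) := by
    intro i j
    have h1 : f (x j - x i) = f (x i - x j) := by
      rw [← heven (x i - x j), neg_sub]
    have h2 : (c i * (starRingEnd ℂ) (c j)).im = -(c j * (starRingEnd ℂ) (c i)).im := by
      simp only [Complex.mul_im, Complex.conj_re, Complex.conj_im]; ring
    simp only [ht, h1, h2]; ring
  have e1 : ∑ i, ∑ j, t i j = ∑ i, ∑ j, -(t j i) :=
    Finset.sum_congr rfl fun i _ => Finset.sum_congr rfl fun j _ => key i j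
  have e2 : ∑ i, ∑ j, -(t j i) = -(∑ i, ∑ j, t i j) := by
    rw [show (∑ i, ∑ j, -(t j i)) = -(∑ i, ∑ j, t j i) by simp, Finset.sum_comm]
  have hzero : ∑ i, ∑ j, t i j = 0 := by
    have := e1.trans e2
    linarith
  constructor
  · rw [Complex.re_sum]
    simp_rw [Complex.re_sum, expand_re]
    simpa using h n x c
  · rw [Complex.im_sum]
    simp_rw [Complex.im_sum, expand_im]
    simp only [Complex.zero_im]
    exact hzero.symm


lemma integrable_exp_cos (u : ℝ) :
    IntegrableOn (fun s : ℝ => Real.exp (-s) * Real.cos (u * s)) (Set.Ioi (0:ℝ)) := by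
  have hint : IntegrableOn (fun s : ℝ => Real.exp (-(1:ℝ) * s)) (Set.Ioi (0:ℝ)) :=
    exp_neg_integrableOn_Ioi 0 one_pos
  refine Integrable.mono' hint ?_ ?_
  · exact ((Real.continuous_exp.comp continuous_neg).mul
      (Real.continuous_cos.comp (continuous_const.mul continuous_id))).aestronglyMeasurable
  · filter_upwards with s
    rw [Real.norm_eq_abs, abs_mul, Real.abs_exp]
    calc Real.exp (-s) * |Real.cos (u * s)| ≤ Real.exp (-s) * 1 := by
          exact mul_le_mul_of_nonneg_left (Real.abs_cos_le_one _) (Real.exp_nonneg _)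
      _ = Real.exp (-1 * s) := by rw [mul_one]; ring_nf

lemma integral_exp_cos (u : ℝ) :
    ∫ s in Set.Ioi (0:ℝ), Real.exp (-s) * Real.cos (u * s) = 1 / (1 + u ^ 2) := by
  have hu : (1:ℝ) + u ^ 2 ≠ 0 := by positivity
  set F : ℝ → ℝ := fun s => Real.exp (-s) * (u * Real.sin (u * s) - Real.cos (u * s)) / (1 + u ^ 2)
    with hF
  have hderiv : ∀ s : ℝ, HasDerivAt F (Real.exp (-s) * Real.cos (u * s)) s := by
    intro s
    have he : HasDerivAt (fun s : ℝ => Real.exp (-s)) (-Real.exp (-s)) s := by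
      simpa [Function.comp_def] using (Real.hasDerivAt_exp (-s)).comp s (hasDerivAt_neg s)
    have hus : HasDerivAt (fun s : ℝ => u * s) u s := by
      simpa using (hasDerivAt_id s).const_mul u
    have hsin : HasDerivAt (fun s : ℝ => Real.sin (u * s)) (Real.cos (u * s) * u) s :=
      (Real.hasDerivAt_sin (u * s)).comp s hus
    have hcos : HasDerivAt (fun s : ℝ => Real.cos (u * s)) (-Real.sin (u * s) * u) s :=
      (Real.hasDerivAt_cos (u * s)).comp s hus
    have hmain : HasDerivAt F
        ((-Real.exp (-s) * (u * Real.sin (u * s) - Real.cos (u * s))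
          + Real.exp (-s) * (u * (Real.cos (u * s) * u) - (-Real.sin (u * s) * u))) / (1 + u ^ 2))
        s := (he.mul ((hsin.const_mul u).sub hcos)).div_const _
    convert hmain using 1
    field_simp
    ring
  have htend : Tendsto F atTop (nhds 0) := by
    have hb : Tendsto (fun s : ℝ => Real.exp (-s) * ((|u| + 1) / (1 + u ^ 2))) atTop (nhds 0) := by
      simpa using Real.tendsto_exp_neg_atTop_nhds_zero.mul_const ((|u| + 1) / (1 + u ^ 2))
    refine squeeze_zero_norm (fun s => ?_) hb
    rw [hF]
    simp only [Real.norm_eq_abs, abs_div, abs_mul, Real.abs_exp]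
    rw [abs_of_pos (by positivity : (0:ℝ) < 1 + u ^ 2)]
    have habs : |u * Real.sin (u * s) - Real.cos (u * s)| ≤ |u| + 1 := by
      calc |u * Real.sin (u * s) - Real.cos (u * s)|
          ≤ |u * Real.sin (u * s)| + |Real.cos (u * s)| := abs_sub _ _
        _ ≤ |u| * 1 + 1 := by
            rw [abs_mul]
            gcongr
            · exact Real.abs_sin_le_one _
            · exact Real.abs_cos_le_one _
        _ = |u| + 1 := by ring
    rw [mul_div_assoc]
    gcongr
  have := integral_Ioi_of_hasDerivAt_of_tendsto
    ((hderiv 0).continuousAt.continuousWithinAt)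
    (fun s _ => hderiv s) (integrable_exp_cos u) htend
  rw [this, hF]
  simp [Real.exp_zero]
  field_simp


lemma resum_invsq_nonneg (w : ℝ) (n : ℕ) (x : Fin n → ℝ) (c : Fin n → ℂ) :
    0 ≤ ∑ i, ∑ j, (c i * (starRingEnd ℂ) (c j)).re *
      (1 / (1 + (w * (x i - x j)) ^ 2)) := by
  have hintg : ∀ i j : Fin n, Integrable
      (fun s => (c i * (starRingEnd ℂ) (c j)).re *
        (Real.exp (-s) * Real.cos ((w * (x i - x j)) * s)))
      (volume.restrict (Set.Ioi 0)) :=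
    fun i j => ((integrable_exp_cos (w * (x i - x j)))).const_mul _
  have hrep : ∀ i j : Fin n, (c i * (starRingEnd ℂ) (c j)).re *
      (1 / (1 + (w * (x i - x j)) ^ 2))
      = ∫ s in Set.Ioi (0:ℝ), (c i * (starRingEnd ℂ) (c j)).re *
          (Real.exp (-s) * Real.cos ((w * (x i - x j)) * s)) := by
    intro i j
    rw [MeasureTheory.integral_const_mul, integral_exp_cos]
  simp_rw [hrep]
  have step : ∑ i, ∑ j, (∫ s in Set.Ioi (0:ℝ), (c i * (starRingEnd ℂ) (c j)).re *
        (Real.exp (-s) * Real.cos ((w * (x i - x j)) * s)))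
      = ∫ s in Set.Ioi (0:ℝ), ∑ i, ∑ j, (c i * (starRingEnd ℂ) (c j)).re *
        (Real.exp (-s) * Real.cos ((w * (x i - x j)) * s)) := by
    rw [MeasureTheory.integral_finset_sum _
      (fun i _ => MeasureTheory.integrable_finset_sum _ (fun j _ => hintg i j))]
    exact Finset.sum_congr rfl fun i _ =>
      (MeasureTheory.integral_finset_sum _ (fun j _ => hintg i j)).symm
  rw [step]
  apply MeasureTheory.setIntegral_nonneg measurableSet_Ioi
  intro s _
  have hkey := resum_cos_nonneg (w * s) n x c
  have hc : ∀ i j : Fin n, (c i * (starRingEnd ℂ) (c j)).re *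
      (Real.exp (-s) * Real.cos ((w * (x i - x j)) * s))
      = Real.exp (-s) * ((c i * (starRingEnd ℂ) (c j)).re *
          Real.cos ((w * s) * (x i - x j))) := by
    intro i j
    rw [show (w * (x i - x j)) * s = (w * s) * (x i - x j) by ring]
    ring
  simp_rw [hc, ← Finset.mul_sum]
  exact mul_nonneg (Real.exp_nonneg (-s)) hkey

lemma pd_limit {F : ℕ → ℝ → ℂ} {φ : ℝ → ℂ} (hF : ∀ N, IsPosDefFun (F N))
    (hlim : ∀ y, Tendsto (fun N => F N y) atTop (nhds (φ y))) : IsPosDefFun φ := by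
  intro n x c
  have htend : Tendsto (fun N => ∑ i, ∑ j, c i * (starRingEnd ℂ) (c j) * F N (x i - x j))
      atTop (nhds (∑ i, ∑ j, c i * (starRingEnd ℂ) (c j) * φ (x i - x j))) := by
    apply tendsto_finset_sum
    intro i _
    apply tendsto_finset_sum
    intro j _
    exact (hlim _).const_mul _
  rw [Complex.le_def]
  constructor
  · have hre := (Complex.continuous_re.tendsto _).comp htend
    have h0 : ∀ N, (0:ℝ) ≤ (∑ i, ∑ j, c i * (starRingEnd ℂ) (c j) * F N (x i - x j)).re := by
      intro N
      have := (Complex.le_def.mp (hF N n x c)).1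
      simpa using this
    simpa using le_of_tendsto_of_tendsto' tendsto_const_nhds hre h0
  · have him : Tendsto (fun N => (∑ i, ∑ j, c i * (starRingEnd ℂ) (c j) * F N (x i - x j)).im)
        atTop (nhds ((∑ i, ∑ j, c i * (starRingEnd ℂ) (c j) * φ (x i - x j)).im)) :=
      (Complex.continuous_im.tendsto _).comp htend
    have h0 : ∀ N, (∑ i, ∑ j, c i * (starRingEnd ℂ) (c j) * F N (x i - x j)).im = 0 :=
      fun N => ((Complex.le_def.mp (hF N n x c)).2).symm.trans Complex.zero_im
    rw [funext h0] at him
    rw [Complex.zero_im]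
    exact tendsto_nhds_unique tendsto_const_nhds him

lemma pd_mul {φ ψ : ℝ → ℂ} (hφ : IsPosDefFun φ) (hψ : IsPosDefFun ψ)
    (hherm : ∀ y : ℝ, (starRingEnd ℂ) (ψ y) = ψ (-y)) :
    IsPosDefFun (fun y => φ y * ψ y) := by
  intro n x c
  classical
  show 0 ≤ ∑ i, ∑ j, c i * (starRingEnd ℂ) (c j) * (φ (x i - x j) * ψ (x i - x j))
  set B : Matrix (Fin n) (Fin n) ℂ := Matrix.of fun i j => ψ (x i - x j) with hBdef
  have hB : B.PosSemidef := by
    refine Matrix.PosSemidef.of_dotProduct_mulVec_nonneg ?_ ?_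
    · ext i j
      simp only [Matrix.conjTranspose_apply, hBdef, Matrix.of_apply, star_def]
      rw [hherm, neg_sub]
    · intro v
      have h := hψ n x (star v)
      have heq : dotProduct (star v) (B.mulVec v)
          = ∑ i, ∑ j, (star v) i * (starRingEnd ℂ) ((star v) j) * ψ (x i - x j) := by
        simp only [dotProduct, Matrix.mulVec, hBdef, Matrix.of_apply,
          Pi.star_apply, Finset.mul_sum]
        refine Finset.sum_congr rfl fun i _ => Finset.sum_congr rfl fun j _ => ?_
        simp only [star_def, Complex.conj_conj]
        ring
      rw [heq]
      exact h
  obtain ⟨M, hM⟩ : ∃ M : Matrix (Fin n) (Fin n) ℂ, B = M.conjTranspose * M := by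
    open scoped MatrixOrder in
    obtain ⟨X, hX, -, hXB⟩ :=
      CFC.exists_sqrt_of_isSelfAdjoint_of_quasispectrumRestricts hB.isHermitian
        (QuasispectrumRestricts.nnreal_of_nonneg (sub_zero B ▸ hB.nonneg))
    refine ⟨X, ?_⟩
    rw [← hXB, ← Matrix.star_eq_conjTranspose, hX.star_eq]
  have hBij : ∀ i j, ψ (x i - x j) = ∑ k, (starRingEnd ℂ) (M k i) * M k j := by
    intro i j
    have h1 : B i j = (M.conjTranspose * M) i j := by rw [← hM]
    simpa [Matrix.mul_apply, Matrix.conjTranspose_apply, hBdef, star_def] using h1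
  have hre : (∑ i, ∑ j, c i * (starRingEnd ℂ) (c j) * (φ (x i - x j) * ψ (x i - x j)))
      = ∑ k : Fin n, ∑ i, ∑ j, (c i * (starRingEnd ℂ) (M k i))
          * (starRingEnd ℂ) (c j * (starRingEnd ℂ) (M k j)) * φ (x i - x j) := by
    have hterm : ∀ i j, c i * (starRingEnd ℂ) (c j) * (φ (x i - x j) * ψ (x i - x j))
        = ∑ k : Fin n, (c i * (starRingEnd ℂ) (M k i))
            * (starRingEnd ℂ) (c j * (starRingEnd ℂ) (M k j)) * φ (x i - x j) := by
      intro i j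
      rw [hBij i j, Finset.mul_sum, Finset.mul_sum]
      refine Finset.sum_congr rfl fun k _ => ?_
      simp only [map_mul, Complex.conj_conj]
      ring
    simp_rw [hterm]
    have A : ∀ i : Fin n, (∑ j, ∑ k : Fin n, (c i * (starRingEnd ℂ) (M k i))
        * (starRingEnd ℂ) (c j * (starRingEnd ℂ) (M k j)) * φ (x i - x j))
        = ∑ k : Fin n, ∑ j, (c i * (starRingEnd ℂ) (M k i))
        * (starRingEnd ℂ) (c j * (starRingEnd ℂ) (M k j)) * φ (x i - x j) :=
      fun i => Finset.sum_comm
    simp_rw [A]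
    exact Finset.sum_comm
  rw [hre]
  exact Finset.sum_nonneg fun k _ => hφ n x (fun i => c i * (starRingEnd ℂ) (M k i))

lemma tendsto_sinh_prod (t : ℝ) :
    Tendsto (fun N => t * ∏ k ∈ Finset.range N, (1 + t^2 / (Real.pi^2 * ((k:ℝ)+1)^2)))
      atTop (nhds (Real.sinh t)) := by
  set z : ℂ := ((t/Real.pi : ℝ):ℂ) * Complex.I with hzdef
  have h := Complex.tendsto_euler_sin_prod z
  have him := (Complex.continuous_im.tendsto _).comp h
  have hz : (Real.pi:ℂ) * z = (t:ℂ) * Complex.I := by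
    rw [hzdef]
    have hpi : (Real.pi : ℂ) ≠ 0 := by exact_mod_cast Real.pi_ne_zero
    push_cast
    rw [← mul_assoc]
    congr 1
    field_simp
  have hprod : ∀ j : ℕ, (1 - z^2 / ((j:ℂ)+1)^2)
      = ((1 + t^2/(Real.pi^2*((j:ℝ)+1)^2) : ℝ) : ℂ) := by
    intro j
    rw [hzdef, mul_pow, Complex.I_sq]
    have hj : ((j:ℂ)+1) ≠ 0 := Nat.cast_add_one_ne_zero j
    have hpi : (Real.pi : ℂ) ≠ 0 := by exact_mod_cast Real.pi_ne_zero
    push_cast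
    field_simp
    ring
  have key1 : (fun N => ((Real.pi:ℂ) * z * ∏ j ∈ Finset.range N,
      (1 - z^2 / ((j:ℂ)+1)^2)).im)
      = fun N => t * ∏ k ∈ Finset.range N, (1 + t^2 / (Real.pi^2 * ((k:ℝ)+1)^2)) := by
    funext N
    rw [hz, Finset.prod_congr rfl fun j _ => hprod j, ← Complex.ofReal_prod]
    rw [show (t:ℂ) * Complex.I * ((∏ k ∈ Finset.range N,
        (1 + t^2 / (Real.pi^2 * ((k:ℝ)+1)^2)) : ℝ) : ℂ)
      = (((t * ∏ k ∈ Finset.range N, (1 + t^2 / (Real.pi^2 * ((k:ℝ)+1)^2)) : ℝ)):ℂ)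
        * Complex.I by push_cast; ring, Complex.mul_I_im, Complex.ofReal_re]
  have key2 : (Complex.sin (Real.pi * z)).im = Real.sinh t := by
    rw [hz, Complex.sin_mul_I]
    simp [← Complex.ofReal_sinh]
  rw [show (Complex.im ∘ fun N => (Real.pi:ℂ) * z * ∏ j ∈ Finset.range N,
      (1 - z^2 / ((j:ℂ)+1)^2)) = fun N => ((Real.pi:ℂ) * z * ∏ j ∈ Finset.range N,
      (1 - z^2 / ((j:ℂ)+1)^2)).im from rfl, key1, key2] at him
  exact him

noncomputable def gFun (c d : ℝ) (x : ℝ) : ℝ :=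
  if x = 0 then c / d else Real.sinh (c*x) / Real.sinh (d*x)

noncomputable def ratioSeq (c d : ℝ) (N : ℕ) (x : ℝ) : ℝ :=
  (c/d) * ∏ k ∈ Finset.range N,
    ((1 + (c*x)^2/(Real.pi^2*((k:ℝ)+1)^2)) / (1 + (d*x)^2/(Real.pi^2*((k:ℝ)+1)^2)))

lemma gFun_even (c d : ℝ) (x : ℝ) : gFun c d (-x) = gFun c d x := by
  unfold gFun
  by_cases hx : x = 0
  · simp [hx]
  · rw [if_neg hx, if_neg (neg_ne_zero.mpr hx)]
    rw [mul_neg, mul_neg, Real.sinh_neg, Real.sinh_neg, neg_div_neg_eq]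

lemma tendsto_ratioSeq {c d : ℝ} (hc : 0 < c) (hd : 0 < d) (x : ℝ) :
    Filter.Tendsto (fun N => ratioSeq c d N x) atTop (nhds (gFun c d x)) := by
  by_cases hx : x = 0
  · subst hx
    have : ∀ N, ratioSeq c d N 0 = c / d := by
      intro N
      unfold ratioSeq
      simp
    rw [show gFun c d 0 = c / d from if_pos rfl]
    simpa [this] using (tendsto_const_nhds : Filter.Tendsto (fun _ : ℕ => c/d) atTop (nhds (c/d)))
  · have h1 := tendsto_sinh_prod (c*x)
    have h2 := tendsto_sinh_prod (d*x)
    have hdx : d * x ≠ 0 := mul_ne_zero hd.ne' hx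
    have hsd : Real.sinh (d*x) ≠ 0 := fun H => hdx (Real.sinh_eq_zero.mp H)
    have hquot := h1.div h2 hsd
    rw [show gFun c d x = Real.sinh (c*x) / Real.sinh (d*x) from if_neg hx]
    refine Filter.Tendsto.congr (fun N => ?_) hquot
    unfold ratioSeq
    rw [Finset.prod_div_distrib]
    have hQ : (0:ℝ) < ∏ k ∈ Finset.range N, (1 + (d*x)^2/(Real.pi^2*((k:ℝ)+1)^2)) :=
      Finset.prod_pos fun k _ => by positivity
    have hP : (0:ℝ) < ∏ k ∈ Finset.range N, (1 + (c*x)^2/(Real.pi^2*((k:ℝ)+1)^2)) :=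
      Finset.prod_pos fun k _ => by positivity
    simp only [Pi.div_apply]
    field_simp

lemma resum_one_nonneg (n : ℕ) (x : Fin n → ℝ) (c : Fin n → ℂ) :
    0 ≤ ∑ i, ∑ j, (c i * (starRingEnd ℂ) (c j)).re := by
  have := resum_cos_nonneg 0 n x c
  simpa using this

lemma pd_const {k : ℝ} (hk : 0 ≤ k) : IsPosDefFun (fun _ => (k : ℂ)) := by
  have : IsPosDefFun (fun y : ℝ => (((fun _ : ℝ => k) y : ℝ) : ℂ)) := by
    apply pd_of_re (f := fun _ : ℝ => k) (fun y => rfl)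
    intro n x c
    show 0 ≤ ∑ i, ∑ j, (c i * (starRingEnd ℂ) (c j)).re * k
    simp_rw [← Finset.sum_mul]
    exact mul_nonneg (resum_one_nonneg n x c) hk
  exact this

lemma pd_ratio_factor {c d : ℝ} (hc : 0 < c) (hcd : c ≤ d) {m : ℝ} (hm : 0 < m) :
    IsPosDefFun (fun y : ℝ =>
      (((1 + (c*y)^2/m) / (1 + (d*y)^2/m) : ℝ) : ℂ)) := by
  have hd : 0 < d := lt_of_lt_of_le hc hcd
  set w : ℝ := d / Real.sqrt m with hw
  have hrw : ∀ y : ℝ, (1 + (c*y)^2/m) / (1 + (d*y)^2/m)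
      = c^2/d^2 + (1 - c^2/d^2) * (1/(1 + (w*y)^2)) := by
    intro y
    have hsq : Real.sqrt m ^ 2 = m := Real.sq_sqrt hm.le
    have h1 : (w*y)^2 = d^2*y^2/m := by
      rw [hw, div_mul_eq_mul_div, div_pow, hsq, mul_pow]
    rw [h1]
    have hm' : m ≠ 0 := hm.ne'
    have hd' : d ≠ 0 := hd.ne'
    have hden : 0 < m + d^2*y^2 := by positivity
    field_simp
    ring
  apply pd_of_re
  · intro y
    simp [neg_sq, mul_neg]
  · intro n x cc
    simp_rw [hrw]
    have e1 : ∑ i, ∑ j, (cc i * (starRingEnd ℂ) (cc j)).re *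
        (c^2/d^2 + (1 - c^2/d^2) * (1/(1 + (w*(x i - x j))^2)))
        = (c^2/d^2) * (∑ i, ∑ j, (cc i * (starRingEnd ℂ) (cc j)).re)
          + (1 - c^2/d^2) * (∑ i, ∑ j, (cc i * (starRingEnd ℂ) (cc j)).re *
              (1/(1 + (w*(x i - x j))^2))) := by
      rw [Finset.mul_sum, Finset.mul_sum, ← Finset.sum_add_distrib]
      refine Finset.sum_congr rfl fun i _ => ?_
      rw [Finset.mul_sum, Finset.mul_sum, ← Finset.sum_add_distrib]
      refine Finset.sum_congr rfl fun j _ => ?_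
      ring
    rw [e1]
    have hA : (0:ℝ) ≤ c^2/d^2 := by positivity
    have hB : (0:ℝ) ≤ 1 - c^2/d^2 := by
      have : c^2 ≤ d^2 := by nlinarith
      have : c^2/d^2 ≤ 1 := by
        rw [div_le_one (by positivity)]
        exact this
      linarith
    exact add_nonneg (mul_nonneg hA (resum_one_nonneg n x cc))
      (mul_nonneg hB (resum_invsq_nonneg w n x cc))

lemma pd_ratioSeq {c d : ℝ} (hc : 0 < c) (hcd : c ≤ d) (N : ℕ) :
    IsPosDefFun (fun y : ℝ => ((ratioSeq c d N y : ℝ) : ℂ)) := by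
  have hd : 0 < d := lt_of_lt_of_le hc hcd
  induction N with
  | zero =>
    have heq : (fun y : ℝ => ((ratioSeq c d 0 y : ℝ) : ℂ)) = fun _ => ((c/d : ℝ) : ℂ) := by
      funext y
      unfold ratioSeq
      simp
    rw [heq]
    exact pd_const (by positivity)
  | succ N ih =>
    have heq : (fun y : ℝ => ((ratioSeq c d (N+1) y : ℝ) : ℂ))
        = fun y => ((ratioSeq c d N y : ℝ) : ℂ) *
            (((1 + (c*y)^2/(Real.pi^2*((N:ℝ)+1)^2)) /
              (1 + (d*y)^2/(Real.pi^2*((N:ℝ)+1)^2)) : ℝ) : ℂ) := by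
      funext y
      unfold ratioSeq
      rw [Finset.prod_range_succ]
      push_cast
      ring
    rw [heq]
    refine pd_mul ih (pd_ratio_factor hc hcd (by positivity)) ?_
    intro y
    rw [Complex.conj_ofReal]
    norm_num [neg_sq, mul_neg]

lemma pd_gFun {c d : ℝ} (hc : 0 < c) (hcd : c ≤ d) :
    IsPosDefFun (fun y : ℝ => ((gFun c d y : ℝ) : ℂ)) := by
  have hd : 0 < d := lt_of_lt_of_le hc hcd
  refine pd_limit (F := fun N => fun y : ℝ => ((ratioSeq c d N y : ℝ) : ℂ))
    (fun N => pd_ratioSeq hc hcd N) ?_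
  intro y
  exact (Complex.continuous_ofReal.tendsto _).comp (tendsto_ratioSeq hc hd y)

lemma pd_mul_prod {φ : ℝ → ℂ} {n : ℕ} (hφ : IsPosDefFun φ) {h : Fin n → ℝ → ℝ}
    (hpd : ∀ i, IsPosDefFun (fun y : ℝ => ((h i y : ℝ) : ℂ)))
    (he : ∀ i y, h i (-y) = h i y) :
    IsPosDefFun (fun y => φ y * ((∏ i, h i y : ℝ) : ℂ)) := by
  classical
  suffices H : ∀ s : Finset (Fin n),
      IsPosDefFun (fun y => φ y * ((∏ i ∈ s, h i y : ℝ) : ℂ)) from H Finset.univ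
  intro s
  induction s using Finset.induction with
  | empty =>
    have : (fun y => φ y * ((∏ i ∈ (∅ : Finset (Fin n)), h i y : ℝ) : ℂ)) = φ := by
      funext y
      simp
    rw [this]
    exact hφ
  | insert a s hx ih =>
    have : (fun y => φ y * ((∏ i ∈ insert a s, h i y : ℝ) : ℂ))
        = fun y => (φ y * ((∏ i ∈ s, h i y : ℝ) : ℂ)) * ((h a y : ℝ) : ℂ) := by
      funext y
      rw [Finset.prod_insert hx]
      push_cast
      ring
    rw [this]
    refine pd_mul ih (hpd a) ?_
    intro y
    rw [Complex.conj_ofReal, he a y]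

end Aux

theorem sinhProd_not_posdef_mono {n : ℕ} (a a' b b' : Fin n → ℝ)
    (ha' : ∀ i, 0 < a' i) (haa' : ∀ i, a' i ≤ a i)
    (hb : ∀ i, 0 < b i) (hbb' : ∀ i, b i ≤ b' i)
    (h : ¬ IsPosDefFun fun x => ((sinhProd a' b' x : ℝ) : ℂ)) :
    ¬ IsPosDefFun fun x => ((sinhProd a b x : ℝ) : ℂ) := by
  intro H
  apply h
  have key : ∀ y : ℝ, sinhProd a' b' y = sinhProd a b y *
      ∏ i, (gFun (a' i) (a i) y * gFun (b i) (b' i) y) := by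
    intro y
    by_cases hy : y = 0
    · subst hy
      unfold sinhProd gFun
      simp only [if_pos rfl, if_true]
      rw [← Finset.prod_mul_distrib]
      refine Finset.prod_congr rfl fun i _ => ?_
      have h1 : a i ≠ 0 := (lt_of_lt_of_le (ha' i) (haa' i)).ne'
      have h2 : b i ≠ 0 := (hb i).ne'
      have h3 : b' i ≠ 0 := (lt_of_lt_of_le (hb i) (hbb' i)).ne'
      field_simp
    · unfold sinhProd gFun
      simp only [if_neg hy]
      rw [← Finset.prod_mul_distrib]
      refine Finset.prod_congr rfl fun i _ => ?_
      have h1 : Real.sinh (a i * y) ≠ 0 := fun H' =>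
        (mul_ne_zero (lt_of_lt_of_le (ha' i) (haa' i)).ne' hy) (Real.sinh_eq_zero.mp H')
      have h2 : Real.sinh (b i * y) ≠ 0 := fun H' =>
        (mul_ne_zero (hb i).ne' hy) (Real.sinh_eq_zero.mp H')
      have h3 : Real.sinh (b' i * y) ≠ 0 := fun H' =>
        (mul_ne_zero (lt_of_lt_of_le (hb i) (hbb' i)).ne' hy) (Real.sinh_eq_zero.mp H')
      field_simp
      have h1' : Real.sinh (y * a i) ≠ 0 := by rwa [mul_comm]
      have h2' : Real.sinh (y * b i) ≠ 0 := by rwa [mul_comm]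
      rw [mul_div_mul_right _ _ h2', mul_div_mul_right _ _ h1']
  have heq : (fun y : ℝ => ((sinhProd a' b' y : ℝ) : ℂ))
      = fun y => ((sinhProd a b y : ℝ) : ℂ) *
          ((∏ i, (gFun (a' i) (a i) y * gFun (b i) (b' i) y) : ℝ) : ℂ) := by
    funext y
    rw [key y]
    push_cast
    ring
  rw [heq]
  refine pd_mul_prod H (fun i => ?_) (fun i y => ?_)
  · have hpd := pd_mul (pd_gFun (ha' i) (haa' i)) (pd_gFun (hb i) (hbb' i))
      (fun y => by rw [Complex.conj_ofReal, gFun_even])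
    have e : (fun y : ℝ => (((gFun (a' i) (a i) y * gFun (b i) (b' i) y) : ℝ) : ℂ))
        = fun y => ((gFun (a' i) (a i) y : ℝ) : ℂ) * ((gFun (b i) (b' i) y : ℝ) : ℂ) := by
      funext y
      push_cast
      ring
    rw [e]
    exact hpd
  · rw [gFun_even, gFun_even]
end

section
/- Let a_1,…,a_n and b_1,…,b_n be positive real numbers with a_1 > max{b_1, b_2, …, b_n}. Then the function x ↦ ∏_{i=1}^n sinh(a_i·x)/sinh(b_i·x) (extended by continuity at x = 0) is not positive definite. -/
open scoped ComplexOrder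

section Aux

open Filter Topology

/-- The entire function `sinh z / z` (with value `1` at `0`). -/
noncomputable def sinhc : ℂ → ℂ := fun z => if z = 0 then 1 else Complex.sinh z / z

lemma sinhc_apply_ne {z : ℂ} (hz : z ≠ 0) : sinhc z = Complex.sinh z / z := if_neg hz

lemma sinhc_zero : sinhc 0 = 1 := by simp [sinhc]

lemma differentiableAt_sinhc_of_ne {z : ℂ} (hz : z ≠ 0) : DifferentiableAt ℂ sinhc z := by
  have h : DifferentiableAt ℂ (fun w => Complex.sinh w / w) z :=
    (Complex.differentiable_sinh z).div differentiableAt_id hz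
  apply h.congr_of_eventuallyEq
  filter_upwards [isOpen_ne.mem_nhds hz] with w hw
  exact sinhc_apply_ne hw

lemma continuousAt_sinhc : ContinuousAt sinhc 0 := by
  have h : Tendsto (slope Complex.sinh 0) (𝓝[≠] 0) (𝓝 1) := by
    have := hasDerivAt_iff_tendsto_slope.mp (Complex.hasDerivAt_sinh 0)
    simpa [Complex.cosh_zero] using this
  have h2 : Tendsto sinhc (𝓝[≠] (0 : ℂ)) (𝓝 1) := by
    refine h.congr' ?_
    filter_upwards [self_mem_nhdsWithin] with z hz
    simp [slope_fun_def, Complex.sinh_zero, sinhc_apply_ne hz, div_eq_inv_mul]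
  rw [ContinuousAt, sinhc_zero, ← nhdsNE_sup_pure (0 : ℂ), tendsto_sup]
  refine ⟨h2, tendsto_pure_left.mpr fun s hs => ?_⟩
  simpa [sinhc_zero] using mem_of_mem_nhds hs

lemma differentiable_sinhc : Differentiable ℂ sinhc := by
  intro z
  rcases eq_or_ne z 0 with rfl | hz
  · have he : ∀ᶠ w in 𝓝[≠] (0 : ℂ), DifferentiableAt ℂ sinhc w := by
      filter_upwards [self_mem_nhdsWithin] with w hw using differentiableAt_sinhc_of_ne hw
    exact (Complex.analyticAt_of_differentiable_on_punctured_nhds_of_continuousAt he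
      continuousAt_sinhc).differentiableAt
  · exact differentiableAt_sinhc_of_ne hz

lemma sinhc_ne_zero {z : ℂ} (hz : |z.im| < Real.pi) : sinhc z ≠ 0 := by
  rcases eq_or_ne z 0 with rfl | h0
  · simp [sinhc_zero]
  · rw [sinhc_apply_ne h0]
    refine div_ne_zero (fun hs => ?_) h0
    have hsin : Complex.sin (z * Complex.I) = 0 := by
      rw [Complex.sin_mul_I, hs, zero_mul]
    rw [Complex.sin_eq_zero_iff] at hsin
    obtain ⟨k, hk⟩ := hsin
    have hz0 : z = -(((k : ℝ) * Real.pi : ℝ) : ℂ) * Complex.I := by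
      have hzz : z = ((k : ℂ) * (Real.pi : ℂ)) / Complex.I := by
        rw [eq_div_iff Complex.I_ne_zero, hk]
      rw [hzz, Complex.div_I]
      push_cast
      ring
    have him : z.im = -((k : ℝ) * Real.pi) := by
      rw [hz0]
      simp
    rcases eq_or_ne k 0 with rfl | hk0
    · apply h0
      rw [hz0]
      push_cast
      ring
    · have h1 : (1 : ℝ) ≤ |(k : ℝ)| := by
        exact_mod_cast Int.one_le_abs hk0
      have : Real.pi ≤ |z.im| := by
        rw [him, abs_neg, abs_mul, abs_of_pos Real.pi_pos]
        nlinarith [Real.pi_pos]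
      linarith

lemma sinhc_neg (z : ℂ) : sinhc (-z) = sinhc z := by
  rcases eq_or_ne z 0 with rfl | h0
  · simp
  · rw [sinhc_apply_ne (neg_ne_zero.mpr h0), sinhc_apply_ne h0, Complex.sinh_neg, neg_div_neg_eq]

lemma IsPosDefFun.eval_zero {φ : ℝ → ℂ} (h : IsPosDefFun φ) : 0 ≤ φ 0 := by
  have h1 := h 1 (fun _ => 0) (fun _ => 1)
  simpa using h1

lemma IsPosDefFun.secondDiff {φ : ℝ → ℂ} (hφ : IsPosDefFun φ) (h : ℝ) :
    IsPosDefFun fun x => (2 * φ x - φ (x + h) - φ (x - h)) / ((h : ℂ)) ^ 2 := by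
  intro n x c
  have key := hφ (n + n) (Fin.addCases x fun i => x i + h) (Fin.addCases c fun i => -c i)
  rw [Fin.sum_univ_add] at key
  simp only [Fin.sum_univ_add, Fin.addCases_left, Fin.addCases_right, map_neg, mul_neg, neg_mul,
    sub_add_eq_sub_sub, add_sub_add_right_eq_sub, neg_neg] at key
  rw [← Finset.sum_add_distrib] at key
  simp only [← Finset.sum_add_distrib] at key
  have hmain : 0 ≤ ∑ i, ∑ j, c i * (starRingEnd ℂ) (c j) *
      (2 * φ (x i - x j) - φ (x i - x j + h) - φ (x i - x j - h)) := by
    refine le_trans key (le_of_eq ?_)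
    refine Finset.sum_congr rfl fun i _ => Finset.sum_congr rfl fun j _ => ?_
    rw [sub_add_eq_add_sub]
    ring
  have hfin := mul_nonneg hmain (show (0:ℂ) ≤ (((h ^ 2)⁻¹ : ℝ) : ℂ) by
    rw [Complex.zero_le_real]; positivity)
  refine le_trans hfin (le_of_eq ?_)
  rw [Finset.sum_mul]
  refine Finset.sum_congr rfl fun i _ => ?_
  rw [Finset.sum_mul]
  refine Finset.sum_congr rfl fun j _ => ?_
  push_cast
  ring

lemma isPosDefFun_of_tendsto {Φ : ℕ → ℝ → ℂ} {ψ : ℝ → ℂ} (hΦ : ∀ m, IsPosDefFun (Φ m))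
    (hlim : ∀ x, Tendsto (fun m => Φ m x) atTop (𝓝 (ψ x))) : IsPosDefFun ψ := by
  intro n x c
  have ht : Tendsto (fun m => ∑ i, ∑ j, c i * (starRingEnd ℂ) (c j) * Φ m (x i - x j)) atTop
      (𝓝 (∑ i, ∑ j, c i * (starRingEnd ℂ) (c j) * ψ (x i - x j))) :=
    tendsto_finset_sum _ fun i _ => tendsto_finset_sum _ fun j _ => ((hlim _).const_mul _)
  exact ge_of_tendsto' ht fun m => hΦ m n x c


open Filter Topology Asymptotics in
lemma tendsto_secondDiff {H : ℂ → ℂ} {x : ℝ} (hH : AnalyticAt ℂ H (x : ℂ)) :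
    Tendsto (fun h : ℝ => (2 * H x - H (x + h) - H (x - h)) / (h : ℂ) ^ 2)
      (𝓝[≠] (0 : ℝ)) (𝓝 (-(iteratedDeriv 2 H x))) := by
  obtain ⟨p, hpa⟩ := hH
  obtain ⟨r, hpb⟩ := hpa
  set D : ℂ := iteratedDeriv 2 H x with hD
  set c1 : ℂ := p.coeff 1 with hc1
  have hc2 : p.coeff 2 = 2⁻¹ * D := by
    have h1 := hpb.factorial_smul (1 : ℂ) 2
    rw [FormalMultilinearSeries.apply_eq_pow_smul_coeff] at h1
    simp only [one_pow, one_smul, nsmul_eq_mul] at h1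
    rw [hD, iteratedDeriv_eq_iteratedFDeriv, ← h1]
    norm_num [Nat.factorial]
    ring
  have hc0 : p.coeff 0 = H x := by
    have h0 := hpb.coeff_zero (fun _ => 1)
    rw [← h0, FormalMultilinearSeries.apply_eq_pow_smul_coeff]
    simp
  have hps : ∀ y : ℂ, p.partialSum 3 y = H x + y * c1 + y ^ 2 * (2⁻¹ * D) := by
    intro y
    rw [FormalMultilinearSeries.partialSum]
    rw [Finset.sum_range_succ, Finset.sum_range_succ, Finset.sum_range_one]
    simp only [FormalMultilinearSeries.apply_eq_pow_smul_coeff, smul_eq_mul, hc0, hc2, ← hc1]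
    ring
  set R : ℂ → ℂ := fun y => H (↑x + y) - (H x + y * c1 + y ^ 2 * (2⁻¹ * D)) with hR
  have hO := hpb.hasFPowerSeriesAt.isBigO_sub_partialSum_pow 3
  rw [isBigO_iff] at hO
  obtain ⟨C, hC⟩ := hO
  have hCR : ∀ᶠ y : ℂ in 𝓝 0, ‖R y‖ ≤ C * ‖y‖ ^ 3 := by
    filter_upwards [hC] with y hy
    calc ‖R y‖ = ‖H (↑x + y) - p.partialSum 3 y‖ := by rw [hps y]
      _ ≤ C * ‖‖y‖ ^ 3‖ := hy
      _ = C * ‖y‖ ^ 3 := by rw [norm_pow, norm_norm]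
  have hcast : Tendsto (fun h : ℝ => (h : ℂ)) (𝓝[≠] (0 : ℝ)) (𝓝 0) := by
    have h0 : Tendsto (fun h : ℝ => (h : ℂ)) (𝓝 (0 : ℝ)) (𝓝 ((0:ℝ):ℂ)) :=
      Complex.continuous_ofReal.tendsto 0
    simpa using h0.mono_left (nhdsWithin_le_nhds (s := {(0:ℝ)}ᶜ))
  have hcastneg : Tendsto (fun h : ℝ => (-(h : ℂ))) (𝓝[≠] (0 : ℝ)) (𝓝 0) := by
    simpa using hcast.neg
  have hev1 : ∀ᶠ h : ℝ in 𝓝[≠] (0 : ℝ), ‖R ↑h‖ ≤ C * |h| ^ 3 := by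
    filter_upwards [hcast.eventually hCR] with h hh
    simpa [Complex.norm_real] using hh
  have hev2 : ∀ᶠ h : ℝ in 𝓝[≠] (0 : ℝ), ‖R (-↑h)‖ ≤ C * |h| ^ 3 := by
    filter_upwards [hcastneg.eventually hCR] with h hh
    simpa [Complex.norm_real] using hh
  have hkey : ∀ᶠ h : ℝ in 𝓝[≠] (0 : ℝ),
      -D + -((R ↑h + R (-↑h)) / (h : ℂ) ^ 2)
        = (2 * H x - H (x + h) - H (x - h)) / (h : ℂ) ^ 2 := by
    filter_upwards [self_mem_nhdsWithin] with h hh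
    have hh' : (h : ℂ) ≠ 0 := Complex.ofReal_ne_zero.mpr hh
    have hx1 : H (↑x + ↑h) = H x + ↑h * c1 + (↑h) ^ 2 * (2⁻¹ * D) + R ↑h := by
      rw [hR]; ring
    have hx2 : H (↑x - ↑h) = H x + (-↑h) * c1 + (↑h) ^ 2 * (2⁻¹ * D) + R (-↑h) := by
      have e : (↑x - ↑h : ℂ) = ↑x + -↑h := by ring
      rw [e, hR]; ring
    rw [hx1, hx2]
    field_simp
    ring
  have he : Tendsto (fun h : ℝ => -((R ↑h + R (-↑h)) / (h : ℂ) ^ 2)) (𝓝[≠] (0 : ℝ)) (𝓝 0) := by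
    apply squeeze_zero_norm' (a := fun h : ℝ => 2 * C * |h|)
    · filter_upwards [hev1, hev2, self_mem_nhdsWithin] with h h1 h2 hh
      have hh0 : (h : ℝ) ≠ 0 := hh
      have habs : (0 : ℝ) < |h| := abs_pos.mpr hh0
      rw [norm_neg, norm_div, norm_pow, Complex.norm_real, Real.norm_eq_abs]
      rw [div_le_iff₀ (by positivity)]
      calc ‖R ↑h + R (-↑h)‖ ≤ C * |h| ^ 3 + C * |h| ^ 3 :=
            le_trans (norm_add_le _ _) (add_le_add h1 h2)
        _ = 2 * C * |h| * |h| ^ 2 := by ring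
    · have : Tendsto (fun h : ℝ => 2 * C * |h|) (𝓝 (0 : ℝ)) (𝓝 (2 * C * |0|)) :=
        (continuous_const.mul continuous_abs).tendsto 0
      simpa using this.mono_left nhdsWithin_le_nhds
  have hfinal := he.const_add (-D)
  rw [add_zero] at hfinal
  exact Tendsto.congr' hkey hfinal

end Aux

theorem sinhProd_not_posdef_of_max_lt {n : ℕ} (a b : Fin (n + 1) → ℝ)
    (ha : ∀ i, 0 < a i) (hb : ∀ i, 0 < b i)
    (hmax : ∀ i, b i < a 0) :
    ¬ IsPosDefFun fun x => ((sinhProd a b x : ℝ) : ℂ) := by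
  intro hpos
  classical
  have hpi := Real.pi_pos
  set M : ℝ := Finset.univ.sup' Finset.univ_nonempty b with hM
  have hbM : ∀ i, b i ≤ M := fun i => Finset.le_sup' b (Finset.mem_univ i)
  have hM0 : 0 < M := lt_of_lt_of_le (hb 0) (hbM 0)
  have hMa : M < a 0 := (Finset.sup'_lt_iff _).mpr fun i _ => hmax i
  set y₀ : ℝ := Real.pi / a 0 with hy₀
  set r : ℝ := (Real.pi / a 0 + Real.pi / M) / 2 with hr
  have hy₀pos : 0 < y₀ := div_pos hpi (ha 0)
  have hfrac : Real.pi / a 0 < Real.pi / M := div_lt_div_of_pos_left hpi hM0 hMa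
  have hy₀r : y₀ < r := by rw [hy₀, hr]; linarith
  have hrM : r < Real.pi / M := by rw [hr]; linarith
  set U : Set ℂ := {z : ℂ | |z.im| < Real.pi / M} with hU
  have hUopen : IsOpen U := isOpen_lt (continuous_abs.comp Complex.continuous_im) continuous_const
  have hUreal : ∀ x : ℝ, (x : ℂ) ∈ U := by
    intro x
    simp only [hU, Set.mem_setOf_eq, Complex.ofReal_im, abs_zero]
    positivity
  have hUb : ∀ z ∈ U, ∀ i, |((b i : ℂ) * z).im| < Real.pi := by
    intro z hz i
    have him : ((b i : ℂ) * z).im = b i * z.im := by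
      simp [Complex.mul_im]
    rw [him, abs_mul, abs_of_pos (hb i)]
    have hz' : |z.im| < Real.pi / M := hz
    have h1 : b i * |z.im| < b i * (Real.pi / M) := mul_lt_mul_of_pos_left hz' (hb i)
    have h2 : b i * (Real.pi / M) ≤ M * (Real.pi / M) :=
      mul_le_mul_of_nonneg_right (hbM i) (le_of_lt (div_pos hpi hM0))
    have h3 : M * (Real.pi / M) = Real.pi := by field_simp
    linarith
  set F : ℂ → ℂ := fun z =>
    ∏ i, ((a i : ℂ) / (b i : ℂ) * sinhc ((a i : ℂ) * z) / sinhc ((b i : ℂ) * z)) with hFdef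
  have hFdiff : DifferentiableOn ℂ F U := by
    intro z hz
    refine DifferentiableWithinAt.fun_finsetProd fun i _ => ?_
    have hnum : DifferentiableAt ℂ (fun w => (a i : ℂ) / (b i : ℂ) * sinhc ((a i : ℂ) * w)) z :=
      ((differentiable_sinhc.comp (differentiable_id.const_mul ((a i : ℂ)))) z).const_mul _
    have hden : DifferentiableAt ℂ (fun w => sinhc ((b i : ℂ) * w)) z :=
      (differentiable_sinhc.comp (differentiable_id.const_mul ((b i : ℂ)))) z
    exact ((hnum.div hden (sinhc_ne_zero (hUb z hz i))).differentiableWithinAt)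
  have hFanal : AnalyticOnNhd ℂ F U := hFdiff.analyticOnNhd hUopen
  have hDm : ∀ m, AnalyticOnNhd ℂ (iteratedDeriv m F) U := by
    intro m
    induction m with
    | zero => simpa [iteratedDeriv_zero] using hFanal
    | succ k ih =>
      rw [iteratedDeriv_succ]
      exact ih.deriv
  have hFreal : ∀ x : ℝ, F (x : ℂ) = ((sinhProd a b x : ℝ) : ℂ) := by
    intro x
    rcases eq_or_ne x 0 with rfl | hx
    · rw [hFdef]
      simp only [sinhProd, if_pos rfl]
      push_cast
      refine Finset.prod_congr rfl fun i _ => ?_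
      simp [sinhc_zero]
    · rw [hFdef]
      simp only [sinhProd, if_neg hx]
      push_cast
      refine Finset.prod_congr rfl fun i _ => ?_
      have hax : (a i : ℂ) * (x : ℂ) ≠ 0 :=
        mul_ne_zero (Complex.ofReal_ne_zero.mpr (ha i).ne') (Complex.ofReal_ne_zero.mpr hx)
      have hbx : (b i : ℂ) * (x : ℂ) ≠ 0 :=
        mul_ne_zero (Complex.ofReal_ne_zero.mpr (hb i).ne') (Complex.ofReal_ne_zero.mpr hx)
      have hsb : Complex.sinh ((b i : ℂ) * (x : ℂ)) ≠ 0 := by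
        rw [← Complex.ofReal_mul, ← Complex.ofReal_sinh]
        exact Complex.ofReal_ne_zero.mpr (Real.sinh_ne_zero.mpr (mul_ne_zero (hb i).ne' hx))
      have hxa : (a i : ℂ) ≠ 0 := Complex.ofReal_ne_zero.mpr (ha i).ne'
      have hxb : (b i : ℂ) ≠ 0 := Complex.ofReal_ne_zero.mpr (hb i).ne'
      have hxx : (x : ℂ) ≠ 0 := Complex.ofReal_ne_zero.mpr hx
      rw [sinhc_apply_ne hax, sinhc_apply_ne hbx]
      set S1 : ℂ := Complex.sinh ((a i : ℂ) * (x : ℂ)) with hS1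
      set S2 : ℂ := Complex.sinh ((b i : ℂ) * (x : ℂ)) with hS2
      field_simp
  have hFeven : ∀ z, F (-z) = F z := by
    intro z
    rw [hFdef]
    refine Finset.prod_congr rfl fun i _ => ?_
    rw [mul_neg, mul_neg, sinhc_neg, sinhc_neg]
  -- odd derivatives vanish at 0
  have hpar : ∀ m, ∀ z, iteratedDeriv m F (-z) = (-1 : ℂ) ^ m * iteratedDeriv m F z := by
    intro m
    induction m with
    | zero =>
      intro z
      simpa [iteratedDeriv_zero] using hFeven z
    | succ j ih =>
      intro z
      have hfun : (fun w => iteratedDeriv j F (-w)) = fun w => (-1 : ℂ) ^ j * iteratedDeriv j F w :=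
        funext ih
      have hd : deriv (fun w => iteratedDeriv j F (-w)) z = -deriv (iteratedDeriv j F) (-z) :=
        deriv_comp_neg (iteratedDeriv j F) z
      rw [iteratedDeriv_succ]
      have hstep : deriv (iteratedDeriv j F) (-z) = -((-1 : ℂ) ^ j * deriv (iteratedDeriv j F) z) := by
        calc deriv (iteratedDeriv j F) (-z) = -deriv (fun w => iteratedDeriv j F (-w)) z := by
              rw [hd, neg_neg]
          _ = -((-1 : ℂ) ^ j * deriv (iteratedDeriv j F) z) := by
              rw [hfun, deriv_const_mul_field]
      rw [hstep]
      ring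
  have hodd : ∀ m, Odd m → iteratedDeriv m F 0 = 0 := by
    intro m hm
    have h0 := hpar m 0
    rw [neg_zero, Odd.neg_one_pow hm] at h0
    have h2 : (2 : ℂ) * iteratedDeriv m F 0 = 0 := by linear_combination h0
    have := mul_eq_zero.mp h2
    simpa using this
  -- the positive-definite chain
  set u : ℕ → ℝ := fun m => ((m : ℝ) + 1)⁻¹ with hu
  have hulim : Filter.Tendsto u Filter.atTop (nhdsWithin (0 : ℝ) {(0 : ℝ)}ᶜ) := by
    apply tendsto_nhdsWithin_of_tendsto_nhds_of_eventually_within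
    · have := tendsto_one_div_add_atTop_nhds_zero_nat (𝕜 := ℝ)
      simpa [hu, one_div] using this
    · filter_upwards with m
      have : ((m : ℝ) + 1)⁻¹ ≠ 0 := by positivity
      simpa [hu] using this
  have hchain : ∀ k, IsPosDefFun fun x : ℝ => (-1 : ℂ) ^ k * iteratedDeriv (2 * k) F (x : ℂ) := by
    intro k
    induction k with
    | zero =>
      have heq : (fun x : ℝ => (-1 : ℂ) ^ 0 * iteratedDeriv (2 * 0) F (x : ℂ))
          = fun x : ℝ => ((sinhProd a b x : ℝ) : ℂ) := by
        funext x
        simp [iteratedDeriv_zero, hFreal x]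
      rw [heq]
      exact hpos
    | succ k ih =>
      set ψ : ℝ → ℂ := fun x : ℝ => (-1 : ℂ) ^ k * iteratedDeriv (2 * k) F (x : ℂ) with hψ
      set G : ℂ → ℂ := iteratedDeriv (2 * k) F with hG
      have hID : iteratedDeriv 2 G = iteratedDeriv (2 * (k + 1)) F := by
        have e1 : iteratedDeriv 2 G = deriv (deriv G) := by
          rw [show (2 : ℕ) = 1 + 1 by norm_num, iteratedDeriv_succ, iteratedDeriv_one]
        have e2 : iteratedDeriv (2 * (k + 1)) F = deriv (deriv (iteratedDeriv (2 * k) F)) := by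
          rw [show 2 * (k + 1) = 2 * k + 1 + 1 by ring, iteratedDeriv_succ, iteratedDeriv_succ]
        rw [e1, e2, hG]
      refine isPosDefFun_of_tendsto
        (Φ := fun m => fun x : ℝ => (2 * ψ x - ψ (x + u m) - ψ (x - u m)) / ((u m : ℂ)) ^ 2)
        (fun m => ih.secondDiff (u m)) ?_
      intro y
      have ht := tendsto_secondDiff (H := G) (x := y) (hDm (2 * k) _ (hUreal y))
      have ht2 := (ht.const_mul ((-1 : ℂ) ^ k)).comp hulim
      have hfun : (fun m => (2 * ψ y - ψ (y + u m) - ψ (y - u m)) / ((u m : ℂ)) ^ 2)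
          = fun m => (-1 : ℂ) ^ k *
            ((2 * G ↑y - G (↑y + ↑(u m)) - G (↑y - ↑(u m))) / ((u m : ℂ)) ^ 2) := by
        funext m
        rw [hψ]
        push_cast
        ring
      have hlim : (-1 : ℂ) ^ (k + 1) * iteratedDeriv (2 * (k + 1)) F (y : ℂ)
          = (-1 : ℂ) ^ k * -(iteratedDeriv 2 G ↑y) := by
        rw [hID, pow_succ]
        ring
      rw [hfun, hlim]
      exact ht2
  have hcoeff : ∀ k : ℕ, 0 ≤ (-1 : ℂ) ^ k * iteratedDeriv (2 * k) F 0 := by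
    intro k
    have h0 := (hchain k).eval_zero
    simpa using h0
  -- Taylor series at the zero of F on the imaginary axis
  have hball : Metric.ball (0 : ℂ) r ⊆ U := by
    intro z hz
    simp only [Metric.mem_ball, dist_zero_right] at hz
    have : |z.im| ≤ ‖z‖ := Complex.abs_im_le_norm z
    exact lt_of_le_of_lt this (lt_trans hz hrM)
  have hFdiffBall : DifferentiableOn ℂ F (Metric.ball (0 : ℂ) r) := hFdiff.mono hball
  set z₁ : ℂ := (y₀ : ℝ) * Complex.I with hz₁def
  have hz₁ : z₁ ∈ Metric.ball (0 : ℂ) r := by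
    simp only [Metric.mem_ball, dist_zero_right, hz₁def, norm_mul, Complex.norm_real,
      Complex.norm_I, mul_one, Real.norm_eq_abs, abs_of_pos hy₀pos]
    exact hy₀r
  have hsum := Complex.hasSum_taylorSeries_on_ball hFdiffBall hz₁
  have hFz₁ : F z₁ = 0 := by
    rw [hFdef]
    apply Finset.prod_eq_zero (Finset.mem_univ (0 : Fin (n + 1)))
    have ha0 : (a 0 : ℂ) * z₁ = (Real.pi : ℂ) * Complex.I := by
      rw [hz₁def, hy₀]
      push_cast
      rw [div_mul_eq_mul_div, mul_comm ((Real.pi:ℂ)) Complex.I, mul_div_assoc,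
        mul_comm Complex.I ((Real.pi:ℂ)/(a 0 : ℂ))]
      rw [← mul_assoc, mul_div_assoc', mul_comm ((a 0 : ℂ)) ((Real.pi:ℂ)), mul_div_assoc,
        div_self (Complex.ofReal_ne_zero.mpr (ha 0).ne'), mul_one]
      exact mul_comm _ _
    have hs : sinhc ((Real.pi : ℂ) * Complex.I) = 0 := by
      have hne : (Real.pi : ℂ) * Complex.I ≠ 0 :=
        mul_ne_zero (Complex.ofReal_ne_zero.mpr hpi.ne') Complex.I_ne_zero
      rw [sinhc_apply_ne hne, Complex.sinh_mul_I]
      rw [← Complex.ofReal_sin, Real.sin_pi]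
      simp
    rw [ha0, hs, mul_zero, zero_div]
  rw [hFz₁] at hsum
  -- each term of the series is nonnegative, but the first is positive: contradiction
  have hterm : ∀ m : ℕ, m ≠ 0 →
      0 ≤ (Nat.factorial m : ℂ)⁻¹ • (z₁ - 0) ^ m • iteratedDeriv m F 0 := by
    intro m _
    rcases Nat.even_or_odd m with he | ho
    · obtain ⟨k, hk⟩ := he
      have hm2 : m = 2 * k := by omega
      have hz₁pow : (z₁ - 0) ^ m = ((y₀ ^ (2 * k) : ℝ) : ℂ) * (-1 : ℂ) ^ k := by
        rw [sub_zero, hz₁def, hm2, mul_pow, show Complex.I ^ (2*k) = ((-1:ℂ))^k by rw [pow_mul, Complex.I_sq]]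
        push_cast
        ring
      have heq : (Nat.factorial m : ℂ)⁻¹ • (z₁ - 0) ^ m • iteratedDeriv m F 0
          = (((Nat.factorial m : ℝ)⁻¹ * y₀ ^ (2 * k) : ℝ) : ℂ) * ((-1 : ℂ) ^ k * iteratedDeriv (2 * k) F 0) := by
        rw [smul_eq_mul, smul_eq_mul, hz₁pow, hm2]
        push_cast
        ring
      rw [heq]
      refine mul_nonneg ?_ (hcoeff k)
      rw [Complex.zero_le_real]
      positivity
    · rw [hodd m ho]
      simp
  have ht0 : (Nat.factorial 0 : ℂ)⁻¹ • (z₁ - 0) ^ 0 • iteratedDeriv 0 F 0 = F 0 := by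
    simp [iteratedDeriv_zero]
  have hF0 : F 0 = ((∏ i, a i / b i : ℝ) : ℂ) := by
    have := hFreal 0
    rw [Complex.ofReal_zero] at this
    rw [this]
    simp [sinhProd]
  have hpos0 : (0 : ℂ) < F 0 := by
    rw [hF0, Complex.zero_lt_real]
    exact Finset.prod_pos fun i _ => div_pos (ha i) (hb i)
  have hle := le_hasSum hsum 0 fun j hj => hterm j hj
  rw [ht0] at hle
  exact absurd hle hpos0.not_ge
end

section
/- The function f : ℝ → ℝ defined by f(x) = (sinh(8x)·sinh(6x)·sinh(3x))/(sinh(9x)·sinh(4x)·sinh(4x)) for x ≠ 0 and f(0) = 1 (its continuous extension) is not positive definite. -/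
open scoped ComplexOrder

theorem sinh_863_944_not_posdef (f : ℝ → ℝ)
    (hf : ∀ x : ℝ, x ≠ 0 → f x =
      Real.sinh (8 * x) * Real.sinh (6 * x) * Real.sinh (3 * x) /
        (Real.sinh (9 * x) * Real.sinh (4 * x) * Real.sinh (4 * x)))
    (hf0 : f 0 = 1) :
    ¬ IsPosDefFun fun x => ((f x : ℝ) : ℂ) := by
  intro hpd
  set L := Real.log (3/2) with hLdef
  have hL0 : (0:ℝ) < L := Real.log_pos (by norm_num)
  -- sinh at multiples of L is rational
  have s : ∀ n : ℕ, Real.sinh ((n:ℝ) * L) = ((3/2:ℝ)^n - (2/3:ℝ)^n)/2 := by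
    intro n
    rw [hLdef, ← Real.log_pow, Real.sinh_log (by positivity)]
    congr 2
    rw [← inv_pow]
    norm_num
  -- f is even
  have hfeven : ∀ x : ℝ, f (-x) = f x := by
    intro x
    rcases eq_or_ne x 0 with rfl | hx
    · rw [neg_zero]
    · rw [hf _ (neg_ne_zero.mpr hx), hf _ hx]
      simp only [mul_neg, Real.sinh_neg, neg_mul, neg_neg]
      rw [neg_div_neg_eq]
  -- general value of f at d*L
  have fv : ∀ d : ℕ, d ≠ 0 → f ((d:ℝ)*L) =
      (((3/2:ℝ)^(8*d) - (2/3:ℝ)^(8*d))/2 * (((3/2:ℝ)^(6*d) - (2/3:ℝ)^(6*d))/2)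
        * (((3/2:ℝ)^(3*d) - (2/3:ℝ)^(3*d))/2)) /
      (((3/2:ℝ)^(9*d) - (2/3:ℝ)^(9*d))/2 * (((3/2:ℝ)^(4*d) - (2/3:ℝ)^(4*d))/2)
        * (((3/2:ℝ)^(4*d) - (2/3:ℝ)^(4*d))/2)) := by
    intro d hd
    have hd' : (d:ℝ)*L ≠ 0 :=
      mul_ne_zero (Nat.cast_ne_zero.mpr hd) hL0.ne'
    rw [hf _ hd',
      show (8:ℝ)*((d:ℝ)*L) = ((8*d : ℕ):ℝ)*L by push_cast; ring, s (8*d),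
      show (6:ℝ)*((d:ℝ)*L) = ((6*d : ℕ):ℝ)*L by push_cast; ring, s (6*d),
      show (3:ℝ)*((d:ℝ)*L) = ((3*d : ℕ):ℝ)*L by push_cast; ring, s (3*d),
      show (9:ℝ)*((d:ℝ)*L) = ((9*d : ℕ):ℝ)*L by push_cast; ring, s (9*d),
      show (4:ℝ)*((d:ℝ)*L) = ((4*d : ℕ):ℝ)*L by push_cast; ring, s (4*d)]
  have f1 : f (1*L) = (55306321 / 56472721 : ℝ) := by
    have h := fv 1 one_ne_zero
    rw [show ((1:ℕ):ℝ) = 1 by norm_num] at h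
    rw [h]; norm_num
  have f6 : f (6*L) = (6363063449867091334424925156220110155041307521 / 6363066318233838158289625635657238480334977921 : ℝ) := by
    have h := fv 6 (by norm_num)
    rw [show ((6:ℕ):ℝ) = 6 by norm_num] at h
    rw [h]; norm_num
  have f7 : f (7*L) = (273895958918336116805883635029026599273589055712506561 / 273895969852037288871105079756416216786769462560404161 : ℝ) := by
    have h := fv 7 (by norm_num)
    rw [show ((7:ℕ):ℝ) = 7 by norm_num] at h
    rw [h]; norm_num
  have f8 : f (8*L) = (11790211905391148305864064154256191194787486227994586227571201 / 11790211946869050981283036347979667842444950563190473702668801 : ℝ) := by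
    have h := fv 8 (by norm_num)
    rw [show ((8:ℕ):ℝ) = 8 by norm_num] at h
    rw [h]; norm_num
  have hkey := hpd 4 ![2*L, 3*L, 9*L, 10*L] (![1, 1, -1, -1] : Fin 4 → ℂ)
  simp only [Fin.sum_univ_four, Matrix.cons_val_zero, Matrix.cons_val_one,
    Matrix.head_cons, Matrix.cons_val_two, Matrix.tail_cons, Matrix.cons_val_three,
    map_one, map_neg] at hkey
  rw [show 2*L - 2*L = (0:ℝ) by ring, show 2*L - 3*L = -(1*L) by ring,
    show 2*L - 9*L = -(7*L) by ring, show 2*L - 10*L = -(8*L) by ring,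
    show 3*L - 2*L = 1*L by ring, show 3*L - 3*L = (0:ℝ) by ring,
    show 3*L - 9*L = -(6*L) by ring, show 3*L - 10*L = -(7*L) by ring,
    show 9*L - 2*L = 7*L by ring, show 9*L - 3*L = 6*L by ring,
    show 9*L - 9*L = (0:ℝ) by ring, show 9*L - 10*L = -(1*L) by ring,
    show 10*L - 2*L = 8*L by ring, show 10*L - 3*L = 7*L by ring,
    show 10*L - 9*L = 1*L by ring, show 10*L - 10*L = (0:ℝ) by ring] at hkey
  simp only [hfeven, hf0, f1, f6, f7, f8] at hkey
  norm_num at hkey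
  have hkey' : ((2915881681235416758969434031252714631801382886407476318465355113422214309491438569217472103994499726605604658543345104384134337351284878183989986127622400 : ℝ) / 35294474863410021881880869313592050601101277925344005943606277242196558330549330615957631444825841974003404867550824850783034962787091753731590615369593617 : ℝ) ≤ 0 := by
    rw [← Complex.real_le_real]
    push_cast
    exact hkey
  rw [div_le_iff₀ (by norm_num)] at hkey'
  norm_num at hkey'
end
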